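/- arXiv:1709.06619 — 8 statements merged into one kernel-verified Lean document; each statement's English description precedes it below -/
import Mathlib

section
/- Let β ∈ (0,1), s ∈ [0, β), ω ∈ [0, π/2) and c0 > 0. There exists a constant C > 0, depending only on β, s, ω and c0 (one may take C = (cos ω)^{-1} max(1, c0^{s-1})), such that for every λ ∈ S_ω with Re λ ≥ c0 and every z ∈ ℂ with |Im z| ≤ π/2, |e^{(1-β)z} λ^s (e^z + λ)^{-1}| ≤ C e^{(s-β) Re z} when Re z > 0, and |e^{(1-β)z} λ^s (e^z + λ)^{-1}| ≤ C e^{(1-β) Re z} when Re z ≤ 0. -/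
open Real Complex

set_option maxHeartbeats 1000000 in
/-- Scalar integrand estimate (Lemma 3.1): for `β ∈ (0,1)`, `s ∈ [0,β)`,
`ω ∈ [0,π/2)` and `c0 > 0`, with `C = (cos ω)⁻¹ max(1, c0^{s-1})`, for every
`λ ∈ S_ω` with `Re λ ≥ c0` and every `z` with `|Im z| ≤ π/2`,
`|e^{(1-β)z} λ^s (e^z+λ)⁻¹| ≤ C e^{(s-β) Re z}` when `Re z > 0` and
`≤ C e^{(1-β) Re z}` when `Re z ≤ 0`. -/
theorem scalar_integrand_estimate
    (β s ω c0 : ℝ) (hβ : β ∈ Set.Ioo 0 1) (hs : s ∈ Set.Ico 0 β)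
    (hω0 : 0 ≤ ω) (hωlt : ω < π / 2) (hc0 : 0 < c0) :
    ∃ C : ℝ, 0 < C ∧ C = (Real.cos ω)⁻¹ * max 1 (c0 ^ (s - 1)) ∧
      ∀ lam : ℂ, lam ≠ 0 → |Complex.arg lam| ≤ ω → c0 ≤ lam.re →
        ∀ z : ℂ, |z.im| ≤ π / 2 →
          (0 < z.re →
            ‖Complex.exp (((1 : ℂ) - β) * z) * lam ^ (s : ℂ) *
                (Complex.exp z + lam)⁻¹‖ ≤ C * Real.exp ((s - β) * z.re)) ∧
          (z.re ≤ 0 →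
            ‖Complex.exp (((1 : ℂ) - β) * z) * lam ^ (s : ℂ) *
                (Complex.exp z + lam)⁻¹‖ ≤ C * Real.exp ((1 - β) * z.re)) := by
  obtain ⟨hβ0, hβ1⟩ := hβ
  obtain ⟨hs0, hsβ⟩ := hs
  have hπ : (0:ℝ) < π := Real.pi_pos
  have hcos : 0 < Real.cos ω :=
    Real.cos_pos_of_mem_Ioo ⟨by linarith, hωlt⟩
  set M : ℝ := max 1 (c0 ^ (s - 1)) with hM
  have hM1 : (1:ℝ) ≤ M := le_max_left _ _
  have hM0 : 0 < M := lt_of_lt_of_le one_pos hM1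
  refine ⟨(Real.cos ω)⁻¹ * M, by positivity, rfl, ?_⟩
  intro lam hne harg hre z hzim
  set r : ℝ := ‖lam‖ with hrdef
  have hr : c0 ≤ r := le_trans hre (Complex.re_le_norm lam)
  have hr0 : 0 < r := lt_of_lt_of_le hc0 hr
  set E : ℝ := Real.exp z.re with hEdef
  have hE : 0 < E := Real.exp_pos _
  set w : ℂ := Complex.exp z + lam with hwdef
  set θ : ℝ := Complex.arg lam with hθ
  -- cross term estimate
  have hlre : lam.re = r * Real.cos θ := (Complex.norm_mul_cos_arg lam).symm
  have hlim : lam.im = r * Real.sin θ := (Complex.norm_mul_sin_arg lam).symm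
  have hcross : (Complex.exp z * (starRingEnd ℂ) lam).re = E * r * Real.cos (z.im - θ) := by
    rw [Complex.mul_re, Complex.conj_re, Complex.conj_im, Complex.exp_re, Complex.exp_im,
      hlre, hlim, Real.cos_sub]
    ring
  have hang : |z.im - θ| ≤ π / 2 + ω := by
    have h1 : |θ| ≤ ω := harg
    have := abs_sub (z.im) θ
    calc |z.im - θ| ≤ |z.im| + |θ| := abs_sub _ _
      _ ≤ π / 2 + ω := add_le_add hzim h1
  have hcosge : -Real.sin ω ≤ Real.cos (z.im - θ) := by
    have h1 : Real.cos (π / 2 + ω) = -Real.sin ω := by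
      rw [Real.cos_add]; simp
    have h2 : Real.cos (π / 2 + ω) ≤ Real.cos |z.im - θ| :=
      Real.cos_le_cos_of_nonneg_of_le_pi (abs_nonneg _) (by linarith) hang
    rw [Real.cos_abs] at h2
    linarith
  have hnormSq : Complex.normSq w = E ^ 2 + r ^ 2 + 2 * (E * r * Real.cos (z.im - θ)) := by
    rw [hwdef, Complex.normSq_add, hcross]
    have h1 : Complex.normSq (Complex.exp z) = E ^ 2 := by
      rw [← Complex.sq_norm, Complex.norm_exp]
    have h2 : Complex.normSq lam = r ^ 2 := by rw [← Complex.sq_norm]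
    rw [h1, h2]
  have hsc : Real.sin ω ^ 2 + Real.cos ω ^ 2 = 1 := Real.sin_sq_add_cos_sq ω
  have hct : -(E * r * Real.sin ω) ≤ E * r * Real.cos (z.im - θ) := by
    nlinarith [mul_nonneg hE.le hr0.le, hcosge]
  have hidE : (E * Real.cos ω) ^ 2 = E ^ 2 - (E * Real.sin ω) ^ 2 := by
    have : Real.cos ω ^ 2 = 1 - Real.sin ω ^ 2 := by linarith
    rw [mul_pow, mul_pow, this]; ring
  have hidr : (r * Real.cos ω) ^ 2 = r ^ 2 - (r * Real.sin ω) ^ 2 := by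
    have : Real.cos ω ^ 2 = 1 - Real.sin ω ^ 2 := by linarith
    rw [mul_pow, mul_pow, this]; ring
  have hlow : (max E r * Real.cos ω) ^ 2 ≤ Complex.normSq w := by
    rcases max_cases E r with ⟨h1, _⟩ | ⟨h1, _⟩ <;> rw [h1, hnormSq]
    · have hsq := sq_nonneg (E * Real.sin ω - r)
      have : (E * Real.sin ω - r) ^ 2 = (E * Real.sin ω) ^ 2 - 2 * (E * r * Real.sin ω) + r ^ 2 := by ring
      linarith [hidE, hct]
    · have hsq := sq_nonneg (r * Real.sin ω - E)
      have : (r * Real.sin ω - E) ^ 2 = (r * Real.sin ω) ^ 2 - 2 * (E * r * Real.sin ω) + E ^ 2 := by ring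
      linarith [hidr, hct]
  have hwge : max E r * Real.cos ω ≤ ‖w‖ := by
    have h0 : 0 ≤ max E r * Real.cos ω := by positivity
    rw [Complex.norm_def]
    exact (Real.le_sqrt h0 (Complex.normSq_nonneg w)).2 hlow
  have hw0 : 0 < ‖w‖ := by
    have : 0 < max E r * Real.cos ω := by positivity
    linarith
  have hmaxle : max E r ≤ (Real.cos ω)⁻¹ * ‖w‖ := by
    rw [le_inv_mul_iff₀ hcos, mul_comm]
    exact hwge
  -- abs of the numerator pieces
  have habs1 : ‖Complex.exp (((1 : ℂ) - β) * z)‖ = Real.exp ((1 - β) * z.re) := by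
    rw [Complex.norm_exp]
    congr 1
    simp [Complex.mul_re]
  have habs2 : ‖lam ^ (s : ℂ)‖ = r ^ s := by
    rw [Complex.norm_cpow_of_ne_zero hne]
    simp [hrdef]
  have habs : ‖Complex.exp (((1 : ℂ) - β) * z) * lam ^ (s : ℂ) *
      (Complex.exp z + lam)⁻¹‖ = Real.exp ((1 - β) * z.re) * r ^ s / ‖w‖ := by
    rw [norm_mul, norm_mul, norm_inv, habs1, habs2, div_eq_mul_inv, hwdef]
  rw [← hwdef] at habs
  constructor
  · -- Re z > 0
    intro hz
    rw [habs, div_le_iff₀ hw0]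
    have key : r ^ s * E ^ (1 - s) ≤ (Real.cos ω)⁻¹ * ‖w‖ := by
      have h1 : r ^ s ≤ (max E r) ^ s :=
        Real.rpow_le_rpow hr0.le (le_max_right _ _) hs0
      have h2 : E ^ (1 - s) ≤ (max E r) ^ (1 - s) :=
        Real.rpow_le_rpow hE.le (le_max_left _ _) (by linarith)
      have h3 : r ^ s * E ^ (1 - s) ≤ (max E r) ^ s * (max E r) ^ (1 - s) :=
        mul_le_mul h1 h2 (Real.rpow_nonneg hE.le _) (Real.rpow_nonneg (le_max_of_le_left hE.le) _)
      have h4 : (max E r : ℝ) ^ s * (max E r) ^ (1 - s) = max E r := by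
        rw [← Real.rpow_add (lt_max_of_lt_left hE)]
        norm_num
      rw [h4] at h3
      exact le_trans h3 hmaxle
    have hEsplit : Real.exp ((1 - β) * z.re) = Real.exp ((s - β) * z.re) * E ^ (1 - s) := by
      rw [hEdef, ← Real.exp_mul, ← Real.exp_add]
      ring_nf
    rw [hEsplit]
    calc Real.exp ((s - β) * z.re) * E ^ (1 - s) * r ^ s
        = Real.exp ((s - β) * z.re) * (r ^ s * E ^ (1 - s)) := by ring
      _ ≤ Real.exp ((s - β) * z.re) * ((Real.cos ω)⁻¹ * ‖w‖) :=
          mul_le_mul_of_nonneg_left key (Real.exp_nonneg _)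
      _ ≤ Real.exp ((s - β) * z.re) * ((Real.cos ω)⁻¹ * M * ‖w‖) := by
          have : (Real.cos ω)⁻¹ * ‖w‖ ≤ (Real.cos ω)⁻¹ * M * ‖w‖ := by
            have h5 : (Real.cos ω)⁻¹ ≤ (Real.cos ω)⁻¹ * M := by
              nlinarith [inv_pos.2 hcos]
            exact mul_le_mul_of_nonneg_right h5 hw0.le
          exact mul_le_mul_of_nonneg_left this (Real.exp_nonneg _)
      _ = (Real.cos ω)⁻¹ * M * Real.exp ((s - β) * z.re) * ‖w‖ := by ring
  · -- Re z ≤ 0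
    intro _
    rw [habs, div_le_iff₀ hw0]
    have key : r ^ s ≤ (Real.cos ω)⁻¹ * M * ‖w‖ := by
      have h1 : r ^ (s - 1) ≤ c0 ^ (s - 1) :=
        Real.rpow_le_rpow_of_nonpos hc0 hr (by linarith)
      have h2 : r ^ s = r ^ (s - 1) * r := by
        rw [← Real.rpow_add_one hr0.ne']
        norm_num
      have h3 : r ≤ (Real.cos ω)⁻¹ * ‖w‖ :=
        le_trans (le_max_right E r) hmaxle
      have h4 : c0 ^ (s - 1) ≤ M := le_max_right _ _
      calc r ^ s = r ^ (s - 1) * r := h2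
        _ ≤ M * ((Real.cos ω)⁻¹ * ‖w‖) := by
            apply mul_le_mul (le_trans h1 h4) h3 hr0.le hM0.le
        _ = (Real.cos ω)⁻¹ * M * ‖w‖ := by ring
    calc Real.exp ((1 - β) * z.re) * r ^ s
        ≤ Real.exp ((1 - β) * z.re) * ((Real.cos ω)⁻¹ * M * ‖w‖) :=
          mul_le_mul_of_nonneg_left key (Real.exp_nonneg _)
      _ = (Real.cos ω)⁻¹ * M * Real.exp ((1 - β) * z.re) * ‖w‖ := by ring
end

section
/- Let β ∈ (0,1), s ∈ [0, β), ω ∈ [0, π/2) and c0 > 0, and for λ ∈ S_ω with Re λ ≥ c0 define F_λ(z) = e^{(1-β)z} λ^s (e^z + λ)^{-1}. Then F_λ is complex differentiable at every z ∈ ℂ with |Im z| ≤ π/2, and there exists a constant C > 0 depending only on β, s, ω and c0 such that for all such z, |F_λ'(z)| ≤ C e^{(1+s-β) Re z} when Re z > 0, and |F_λ'(z)| ≤ C e^{(1-β) Re z} when Re z ≤ 0. -/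
open Real Complex

lemma abs_sin_le_sin {x ω : ℝ} (hx : |x| ≤ ω) (hω : ω ≤ π/2) : |Real.sin x| ≤ Real.sin ω := by
  have hpi : (0:ℝ) < π := Real.pi_pos
  have h0 : 0 ≤ ω := le_trans (abs_nonneg x) hx
  have hub : x ≤ π/2 := le_trans (le_abs_self x) (le_trans hx hω)
  have hlb : -(π/2) ≤ x := by
    have h' := neg_abs_le x
    have h'' := le_trans hx hω
    linarith
  have habs : |Real.sin x| = Real.sin |x| := by
    rcases le_or_gt 0 x with h | h
    · rw [_root_.abs_of_nonneg h,
        _root_.abs_of_nonneg (Real.sin_nonneg_of_nonneg_of_le_pi h (by linarith))]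
    · rw [abs_of_neg h, Real.sin_neg,
        _root_.abs_of_nonpos (Real.sin_nonpos_of_nonpos_of_neg_pi_le h.le (by linarith))]
  rw [habs]
  have hxω : |x| ≤ π/2 := le_trans hx hω
  exact Real.strictMonoOn_sin.monotoneOn
    ⟨by linarith [abs_nonneg x], hxω⟩ ⟨by linarith, hω⟩ hx

lemma sector_sum_lower (σ E Lr ar ai br bi : ℝ) (hσ0 : 0 ≤ σ) (hσ1 : σ ≤ 1)
    (ha : ar^2 + ai^2 = E^2) (hb : br^2 + bi^2 = Lr^2)
    (hr : 0 ≤ ar*br) (hib : -(E*(σ*Lr)) ≤ ai*bi) :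
    (1-σ)*E^2 ≤ (ar+br)^2 + (ai+bi)^2 ∧ (1-σ)*Lr^2 ≤ (ar+br)^2 + (ai+bi)^2 := by
  constructor
  · nlinarith [mul_nonneg hσ0 (sq_nonneg (E - Lr)),
      mul_nonneg (by linarith : (0:ℝ) ≤ 1 - σ) (sq_nonneg Lr)]
  · nlinarith [mul_nonneg hσ0 (sq_nonneg (E - Lr)),
      mul_nonneg (by linarith : (0:ℝ) ≤ 1 - σ) (sq_nonneg E)]

set_option maxHeartbeats 1000000 in
/-- Differentiability and derivative bound for the integrand
`F_λ(z) = e^{(1-β)z} λ^s (e^z + λ)⁻¹` on the band `|Im z| ≤ π/2`. -/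
theorem scalar_integrand_deriv_estimate
    (β s ω c0 : ℝ) (hβ : β ∈ Set.Ioo 0 1) (hs : s ∈ Set.Ico 0 β)
    (hω0 : 0 ≤ ω) (hωlt : ω < π / 2) (hc0 : 0 < c0) :
    ∃ C : ℝ, 0 < C ∧
      ∀ lam : ℂ, lam ≠ 0 → |Complex.arg lam| ≤ ω → c0 ≤ lam.re →
        (∀ z : ℂ, |z.im| ≤ π / 2 →
          DifferentiableAt ℂ
            (fun w : ℂ => Complex.exp (((1 : ℂ) - β) * w) * lam ^ (s : ℂ) *
              (Complex.exp w + lam)⁻¹) z) ∧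
        ∀ z : ℂ, |z.im| ≤ π / 2 →
          (0 < z.re →
            ‖deriv
              (fun w : ℂ => Complex.exp (((1 : ℂ) - β) * w) * lam ^ (s : ℂ) *
                (Complex.exp w + lam)⁻¹) z‖ ≤ C * Real.exp ((1 + s - β) * z.re)) ∧
          (z.re ≤ 0 →
            ‖deriv
              (fun w : ℂ => Complex.exp (((1 : ℂ) - β) * w) * lam ^ (s : ℂ) *
                (Complex.exp w + lam)⁻¹) z‖ ≤ C * Real.exp ((1 - β) * z.re)) := by
  obtain ⟨hβ0, hβ1⟩ := hβ
  obtain ⟨hs0, hsβ⟩ := hs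
  have hs1 : s < 1 := lt_trans hsβ hβ1
  have hpi : (0:ℝ) < π := Real.pi_pos
  have hsω0 : 0 ≤ Real.sin ω := Real.sin_nonneg_of_nonneg_of_le_pi hω0 (by linarith)
  have hsω1 : Real.sin ω < 1 := by
    have h := Real.strictMonoOn_sin (a := ω) (b := π/2)
      ⟨by linarith, hωlt.le⟩ ⟨by linarith, le_refl _⟩ hωlt
    simpa using h
  obtain ⟨K, hK, hK2⟩ : ∃ K : ℝ, 0 < K ∧ K^2 = 1 - Real.sin ω :=
    ⟨Real.sqrt (1 - Real.sin ω), Real.sqrt_pos.2 (by linarith),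
      Real.sq_sqrt (by linarith)⟩
  obtain ⟨C, hCdef⟩ : ∃ C : ℝ,
      C = (1-β)*((K*c0)⁻¹+K⁻¹) + (K^2*c0)⁻¹ + (K^2)⁻¹ + 1 := ⟨_, rfl⟩
  have hKc0 : 0 < K * c0 := mul_pos hK hc0
  have hK2c0 : 0 < K^2 * c0 := mul_pos (pow_pos hK 2) hc0
  have hC : 0 < C := by
    have h1 : 0 < (1-β)*((K*c0)⁻¹+K⁻¹) :=
      mul_pos (by linarith) (add_pos (inv_pos.2 hKc0) (inv_pos.2 hK))
    have h2 : 0 < (K^2*c0)⁻¹ := inv_pos.2 hK2c0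
    have h3 : 0 < (K^2)⁻¹ := inv_pos.2 (pow_pos hK 2)
    rw [hCdef]; linarith
  refine ⟨C, hC, fun lam hlam harg hre => ?_⟩
  obtain ⟨L, hLdef⟩ : ∃ L : ℝ, L = ‖lam‖ := ⟨_, rfl⟩
  have hL0 : 0 < L := hLdef ▸ norm_pos_iff.mpr hlam
  have hLc : c0 ≤ L := hLdef ▸ le_trans hre (Complex.re_le_norm lam)
  have hImlam : |lam.im| ≤ Real.sin ω * L := by
    have h1 : lam.im = Real.sin (Complex.arg lam) * L := by
      have hne : ‖lam‖ ≠ 0 := norm_ne_zero_iff.mpr hlam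
      rw [Complex.sin_arg, hLdef]
      field_simp
    have h2 : |Real.sin (Complex.arg lam)| ≤ Real.sin ω :=
      abs_sin_le_sin harg hωlt.le
    rw [h1, abs_mul, _root_.abs_of_pos hL0]
    exact mul_le_mul_of_nonneg_right h2 hL0.le
  -- main pointwise statement
  have main : ∀ z : ℂ, |z.im| ≤ π / 2 → ∃ D : ℂ,
      HasDerivAt (fun w : ℂ => Complex.exp (((1 : ℂ) - β) * w) * lam ^ (s : ℂ) *
        (Complex.exp w + lam)⁻¹) D z ∧
      ‖D‖ ≤ C * Real.exp ((1 - β) * z.re) := by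
    intro z hz
    obtain ⟨hz1, hz2⟩ := abs_le.1 hz
    obtain ⟨E, hEdef⟩ : ∃ E : ℝ, E = Real.exp z.re := ⟨_, rfl⟩
    have hE0 : 0 < E := hEdef ▸ Real.exp_pos _
    have hexpre : (Complex.exp z).re = E * Real.cos z.im := by
      rw [hEdef]; exact Complex.exp_re z
    have hcosnn : 0 ≤ Real.cos z.im := Real.cos_nonneg_of_mem_Icc ⟨hz1, hz2⟩
    have hare : 0 ≤ (Complex.exp z).re := by
      rw [hexpre]; exact mul_nonneg hE0.le hcosnn
    have hure : c0 ≤ (Complex.exp z + lam).re := by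
      have h : (Complex.exp z + lam).re = (Complex.exp z).re + lam.re := by simp
      rw [h]; linarith
    have hu : Complex.exp z + lam ≠ 0 := by
      intro h
      rw [h] at hure; simp at hure; linarith
    obtain ⟨m, hmdef⟩ : ∃ m : ℝ, m = ‖Complex.exp z + lam‖ := ⟨_, rfl⟩
    have hm0 : 0 < m := hmdef ▸ norm_pos_iff.mpr hu
    have hmc : c0 ≤ m := hmdef ▸ le_trans hure (Complex.re_le_norm _)
    -- squared lower bounds
    have haim : |(Complex.exp z).im| ≤ E := by
      have h := Complex.abs_im_le_norm (Complex.exp z)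
      rw [Complex.norm_exp] at h
      rw [hEdef]; exact h
    have hanorm : (Complex.exp z).re^2 + (Complex.exp z).im^2 = E^2 := by
      have h := Complex.sq_norm (Complex.exp z)
      rw [Complex.normSq_apply, Complex.norm_exp] at h
      rw [hEdef]; linear_combination -h
    have hlnorm : lam.re^2 + lam.im^2 = L^2 := by
      have h := Complex.sq_norm lam
      rw [Complex.normSq_apply] at h
      rw [hLdef]; linear_combination -h
    have hm2 : m^2 = ((Complex.exp z).re + lam.re)^2 + ((Complex.exp z).im + lam.im)^2 := by
      have h := Complex.sq_norm (Complex.exp z + lam)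
      rw [Complex.normSq_apply] at h
      have hre' : (Complex.exp z + lam).re = (Complex.exp z).re + lam.re := by simp
      have him' : (Complex.exp z + lam).im = (Complex.exp z).im + lam.im := by simp
      rw [hre', him'] at h
      rw [hmdef]; linear_combination h
    have hprod : -(E * (Real.sin ω * L)) ≤ (Complex.exp z).im * lam.im := by
      have h1 := neg_abs_le ((Complex.exp z).im * lam.im)
      have h2 : |(Complex.exp z).im * lam.im| ≤ E * (Real.sin ω * L) := by
        rw [abs_mul]
        exact mul_le_mul haim hImlam (abs_nonneg _) hE0.le
      linarith
    have hlre0 : 0 < lam.re := lt_of_lt_of_le hc0 hre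
    have hrprod : 0 ≤ (Complex.exp z).re * lam.re := mul_nonneg hare hlre0.le
    have hlow := sector_sum_lower (Real.sin ω) E L (Complex.exp z).re
      (Complex.exp z).im lam.re lam.im hsω0 hsω1.le hanorm hlnorm hrprod hprod
    have hmE : K * E ≤ m := by
      have hsq : (K*E)^2 ≤ m^2 := by
        have h : (K*E)^2 = (1 - Real.sin ω) * E^2 := by rw [mul_pow, hK2]
        rw [h, hm2]
        exact hlow.1
      exact le_of_pow_le_pow_left₀ two_ne_zero hm0.le hsq
    have hmL : K * L ≤ m := by
      have hsq : (K*L)^2 ≤ m^2 := by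
        have h : (K*L)^2 = (1 - Real.sin ω) * L^2 := by rw [mul_pow, hK2]
        rw [h, hm2]
        exact hlow.2
      exact le_of_pow_le_pow_left₀ two_ne_zero hm0.le hsq
    have hmc0 : K * c0 ≤ m := le_trans (mul_le_mul_of_nonneg_left hLc hK.le) hmL
    -- derivative
    have h1 : HasDerivAt (fun w : ℂ => Complex.exp (((1 : ℂ) - β) * w))
        (((1:ℂ) - β) * Complex.exp (((1:ℂ) - β) * z)) z := by
      have h := ((hasDerivAt_id z).const_mul ((1:ℂ) - β)).cexp
      simpa [mul_comm] using h
    have h2 : HasDerivAt (fun w : ℂ => (Complex.exp w + lam)⁻¹)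
        (-(Complex.exp z) / (Complex.exp z + lam)^2) z := by
      have h := ((Complex.hasDerivAt_exp z).add_const lam).inv hu
      exact h
    have hd : HasDerivAt (fun w : ℂ => Complex.exp (((1 : ℂ) - β) * w) * lam ^ (s : ℂ) *
        (Complex.exp w + lam)⁻¹)
        ((((1:ℂ) - β) * Complex.exp (((1:ℂ) - β) * z) * lam ^ (s:ℂ)) * (Complex.exp z + lam)⁻¹
          + (Complex.exp (((1:ℂ) - β) * z) * lam ^ (s:ℂ))
            * (-(Complex.exp z) / (Complex.exp z + lam)^2)) z := by
      have h := (h1.mul_const (lam ^ (s:ℂ))).mul h2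
      exact h
    refine ⟨_, hd, ?_⟩
    -- abs computations
    obtain ⟨E1, hE1def⟩ : ∃ E1 : ℝ, E1 = Real.exp ((1-β) * z.re) := ⟨_, rfl⟩
    have hE10 : 0 < E1 := hE1def ▸ Real.exp_pos _
    have habs1 : ‖Complex.exp (((1:ℂ) - β) * z)‖ = E1 := by
      rw [Complex.norm_exp, hE1def]
      congr 1
      simp [Complex.mul_re, Complex.sub_re, Complex.sub_im]
    have habscpow : ‖lam ^ (s:ℂ)‖ = L ^ s := by
      rw [Complex.norm_cpow_of_ne_zero hlam, hLdef]; simp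
    have hLs : (0:ℝ) ≤ L ^ s := Real.rpow_nonneg hL0.le s
    have hLs1L : L ^ s ≤ 1 + L := by
      rcases le_or_gt L 1 with h | h
      · have := Real.rpow_le_one hL0.le h hs0
        linarith
      · have h2 := Real.rpow_le_rpow_of_exponent_le h.le hs1.le
        rw [Real.rpow_one] at h2
        linarith
    have habsD : ‖(((1:ℂ) - β) * Complex.exp (((1:ℂ) - β) * z) * lam ^ (s:ℂ))
            * (Complex.exp z + lam)⁻¹
          + (Complex.exp (((1:ℂ) - β) * z) * lam ^ (s:ℂ))
            * (-(Complex.exp z) / (Complex.exp z + lam)^2)‖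
        ≤ (1-β) * E1 * (L^s) * m⁻¹ + E1 * (L^s) * E * (m⁻¹ * m⁻¹) := by
      refine le_trans (norm_add_le _ _) ?_
      have hb : ‖(1:ℂ) - (β:ℂ)‖ = 1 - β := by
        rw [show ((1:ℂ) - (β:ℂ)) = ((1 - β : ℝ) : ℂ) by push_cast; ring]
        rw [Complex.norm_real, Real.norm_eq_abs, _root_.abs_of_pos (by linarith)]
      have e1 : ‖(((1:ℂ) - β) * Complex.exp (((1:ℂ) - β) * z) * lam ^ (s:ℂ))
            * (Complex.exp z + lam)⁻¹‖
          = (1-β) * E1 * (L^s) * m⁻¹ := by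
        rw [norm_mul, norm_mul, norm_mul, norm_inv, habs1, habscpow, hb, hmdef]
      have e2 : ‖(Complex.exp (((1:ℂ) - β) * z) * lam ^ (s:ℂ))
            * (-(Complex.exp z) / (Complex.exp z + lam)^2)‖
          = E1 * (L^s) * E * (m⁻¹ * m⁻¹) := by
        have hane : ‖Complex.exp z + lam‖ ≠ 0 := norm_ne_zero_iff.mpr hu
        rw [norm_mul, norm_mul, norm_div, habs1, norm_neg, Complex.norm_exp, habscpow,
          norm_pow, hEdef, hmdef]
        field_simp
      rw [e1, e2]
    -- numeric bounds
    have hminv : m⁻¹ ≤ (K*c0)⁻¹ := inv_anti₀ hKc0 hmc0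
    have hLm : L * m⁻¹ ≤ K⁻¹ := by
      rw [← div_eq_mul_inv, div_le_iff₀ hm0]
      calc L = K⁻¹ * (K * L) := by field_simp
        _ ≤ K⁻¹ * m := mul_le_mul_of_nonneg_left hmL (inv_nonneg.2 hK.le)
    have b1 : L^s * m⁻¹ ≤ (K*c0)⁻¹ + K⁻¹ := by
      have h := mul_le_mul_of_nonneg_right hLs1L (inv_nonneg.2 hm0.le)
      have h' : (1 + L) * m⁻¹ = m⁻¹ + L * m⁻¹ := by ring
      rw [h'] at h
      linarith
    have hmm1 : K^2 * c0 * E ≤ m * m := by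
      have h := mul_le_mul hmE hmc0 hKc0.le hm0.le
      linarith [h]
    have hmm2 : K^2 * (L * E) ≤ m * m := by
      have h := mul_le_mul hmL hmE (mul_pos hK hE0).le hm0.le
      linarith [h]
    have hEb : E * (m⁻¹ * m⁻¹) ≤ (K^2*c0)⁻¹ := by
      rw [show E * (m⁻¹ * m⁻¹) = E / (m * m) by ring, div_le_iff₀ (mul_pos hm0 hm0)]
      calc E = (K^2*c0)⁻¹ * (K^2 * c0 * E) := by field_simp
        _ ≤ (K^2*c0)⁻¹ * (m*m) := mul_le_mul_of_nonneg_left hmm1 (inv_nonneg.2 hK2c0.le)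
    have hLEb : L * E * (m⁻¹ * m⁻¹) ≤ (K^2)⁻¹ := by
      rw [show L * E * (m⁻¹ * m⁻¹) = L * E / (m * m) by ring, div_le_iff₀ (mul_pos hm0 hm0)]
      calc L * E = (K^2)⁻¹ * (K^2 * (L * E)) := by field_simp
        _ ≤ (K^2)⁻¹ * (m*m) := mul_le_mul_of_nonneg_left hmm2 (inv_nonneg.2 (pow_pos hK 2).le)
    have b2 : L^s * E * (m⁻¹ * m⁻¹) ≤ (K^2*c0)⁻¹ + (K^2)⁻¹ := by
      have h := mul_le_mul_of_nonneg_right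
        (mul_le_mul_of_nonneg_right hLs1L hE0.le)
        (mul_nonneg (inv_nonneg.2 hm0.le) (inv_nonneg.2 hm0.le))
      have h' : (1 + L) * E * (m⁻¹ * m⁻¹) = E * (m⁻¹ * m⁻¹) + L * E * (m⁻¹ * m⁻¹) := by ring
      rw [h'] at h
      linarith
    refine le_trans habsD ?_
    have t1 := mul_le_mul_of_nonneg_left b1 (mul_nonneg (by linarith : (0:ℝ) ≤ 1-β) hE10.le)
    have t2 := mul_le_mul_of_nonneg_left b2 hE10.le
    rw [hCdef, ← hE1def]
    linarith [t1, t2, hE10.le]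
  constructor
  · intro z hz
    obtain ⟨D, hD, _⟩ := main z hz
    exact hD.differentiableAt
  · intro z hz
    obtain ⟨D, hD, hDb⟩ := main z hz
    rw [hD.deriv]
    constructor
    · intro hx
      refine le_trans hDb ?_
      apply mul_le_mul_of_nonneg_left _ hC.le
      apply Real.exp_le_exp.2
      nlinarith [mul_nonneg hs0 hx.le]
    · intro _
      exact hDb
end

section
/- Let β ∈ (0,1), s ∈ [0, β), ω ∈ [0, π/2) and c0 > 0, and for λ ∈ S_ω with Re λ ≥ c0 define F_λ(z) = e^{(1-β)z} λ^s (e^z + λ)^{-1}. There exists a constant C > 0 depending only on β, s, ω and c0 such that for every such λ: (a) for every t ∈ ℝ, ∫_{-π/2}^{π/2} |F_λ(t + i y)| dy ≤ π C; (b) ∫_{-∞}^{∞} ( |F_λ(y - i π/2)| + |F_λ(y + i π/2)| ) dy ≤ 2 C ( (β - s)^{-1} + (1 - β)^{-1} ); (c) ∫_{-π/2}^{π/2} |F_λ(t + i y)| dy → 0 as |t| → ∞. -/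
open Real Complex MeasureTheory Filter Set

lemma key_quad (T A B r m : ℝ) (hA : 0 ≤ A) (hr : 0 < r) (hm : |m| ≤ T * r) :
    A^2 + B^2 + r^2 + m^2 ≤ (2 + 3*T^2) * ((A+r)^2 + (B+m)^2) := by
  have h1 : m^2 ≤ (T*r)^2 := by
    have := abs_le.mp hm
    nlinarith [abs_nonneg m, _root_.sq_abs m]
  nlinarith [sq_nonneg (B + 2*m), mul_nonneg hA hr.le, sq_nonneg (T*r), sq_nonneg (A+r), sq_nonneg (B+m)]

lemma exp_int_Ioi (b c : ℝ) (hc : 0 < c) :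
    ∫ x in Ioi b, Real.exp (-(c*x)) = Real.exp (-(c*b))/c := by
  have hd : ∀ x ∈ Ici b, HasDerivAt (fun y => -Real.exp (-(c*y))/c) (Real.exp (-(c*x))) x := by
    intro x _
    have h2 := (((hasDerivAt_id x).const_mul c).neg.exp.neg.div_const c)
    refine h2.congr_deriv ?_
    simp only [Pi.neg_apply, id, mul_one]; field_simp
  have hint : IntegrableOn (fun x => Real.exp (-(c*x))) (Ioi b) := by
    simpa [neg_mul] using exp_neg_integrableOn_Ioi b hc
  have ht : Tendsto (fun y => -Real.exp (-(c*y))/c) atTop (nhds 0) := by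
    have h1 : Tendsto (fun y : ℝ => -(c*y)) atTop atBot :=
      (tendsto_neg_atBot_iff).mpr ((tendsto_const_mul_atTop_of_pos hc).mpr tendsto_id)
    have h2 := (Real.tendsto_exp_atBot.comp h1).neg.div_const c
    simpa using h2
  rw [integral_Ioi_of_hasDerivAt_of_tendsto' hd hint ht]; ring

lemma exp_intOn_Iic (a c : ℝ) (hc : 0 < c) :
    IntegrableOn (fun y : ℝ => Real.exp (c*y)) (Iic a) := by
  rw [← (Measure.measurePreserving_neg (volume : Measure ℝ)).integrableOn_comp_preimage
      (Homeomorph.neg ℝ).measurableEmbedding]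
  simp only [Function.comp_def, neg_preimage, neg_Iic, mul_neg, ← neg_mul]
  rw [integrableOn_Ici_iff_integrableOn_Ioi]
  exact exp_neg_integrableOn_Ioi (-a) hc

lemma exp_int_Iic (a c : ℝ) (hc : 0 < c) :
    ∫ y in Iic a, Real.exp (c*y) = Real.exp (c*a)/c := by
  have h : ∫ y in Iic a, Real.exp (c*y) = ∫ y in Iic a, (fun x => Real.exp (-(c*x))) (-y) := by
    apply setIntegral_congr_fun measurableSet_Iic
    intro y _; simp
  rw [h, integral_comp_neg_Iic a (fun x => Real.exp (-(c*x))), exp_int_Ioi _ c hc]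
  ring_nf

-- lower bound on |a + λ|
lemma abs_add_lower (T : ℝ) (a lam : ℂ) (ha : 0 ≤ a.re) (hr : 0 < lam.re)
    (hm : |lam.im| ≤ T * lam.re) :
    max (‖a‖) (‖lam‖) ≤
      Real.sqrt (2 + 3*T^2) * ‖a + lam‖ := by
  have hK : (0:ℝ) < 2 + 3*T^2 := by positivity
  have h2 : (max (‖a‖) (‖lam‖))^2 ≤ (2 + 3*T^2) * (‖a+lam‖)^2 := by
    have hsq : (‖a+lam‖)^2 = (a.re + lam.re)^2 + (a.im + lam.im)^2 := by
      rw [Complex.sq_norm, Complex.normSq_apply]; simp; ring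
    have hsa : (‖a‖)^2 = a.re^2 + a.im^2 := by
      rw [Complex.sq_norm, Complex.normSq_apply]; ring
    have hsl : (‖lam‖)^2 = lam.re^2 + lam.im^2 := by
      rw [Complex.sq_norm, Complex.normSq_apply]; ring
    have key := key_quad T a.re a.im lam.re lam.im ha hr hm
    have hmax : (max (‖a‖) (‖lam‖))^2 ≤ (‖a‖)^2 + (‖lam‖)^2 := by
      rcases max_cases (‖a‖) (‖lam‖) with ⟨h, _⟩ | ⟨h, _⟩ <;>
        rw [h] <;> nlinarith [norm_nonneg a, norm_nonneg lam]
    calc (max (‖a‖) (‖lam‖))^2 ≤ (‖a‖)^2 + (‖lam‖)^2 := hmax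
      _ ≤ (2 + 3*T^2) * ((a.re + lam.re)^2 + (a.im + lam.im)^2) := by rw [hsa, hsl]; linarith
      _ = (2 + 3*T^2) * (‖a+lam‖)^2 := by rw [hsq]
  have hmn : 0 ≤ max (‖a‖) (‖lam‖) := le_max_of_le_left (norm_nonneg a)
  calc max (‖a‖) (‖lam‖) = Real.sqrt ((max (‖a‖) (‖lam‖))^2) :=
        (Real.sqrt_sq hmn).symm
    _ ≤ Real.sqrt ((2 + 3*T^2) * (‖a+lam‖)^2) := Real.sqrt_le_sqrt h2
    _ = Real.sqrt (2 + 3*T^2) * ‖a+lam‖ := by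
        rw [Real.sqrt_mul hK.le, Real.sqrt_sq (norm_nonneg _)]

-- |lam.im| <= (sin w / cos w) * lam.re from sector condition
lemma sector_im_bound (ω : ℝ) (hω0 : 0 ≤ ω) (hωlt : ω < π/2) (lam : ℂ) (hne : lam ≠ 0)
    (harg : |Complex.arg lam| ≤ ω) (hr : 0 < lam.re) :
    |lam.im| ≤ (Real.sin ω / Real.cos ω) * lam.re := by
  have hπ := Real.pi_pos
  have hcω : 0 < Real.cos ω := Real.cos_pos_of_mem_Ioo ⟨by linarith, hωlt⟩
  have hsω : 0 ≤ Real.sin ω := Real.sin_nonneg_of_nonneg_of_le_pi hω0 (by linarith)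
  have habs : 0 < ‖lam‖ := norm_pos_iff.mpr hne
  have hsin : Real.sin (Complex.arg lam) = lam.im / ‖lam‖ := Complex.sin_arg lam
  have hcos : Real.cos (Complex.arg lam) = lam.re / ‖lam‖ := Complex.cos_arg hne
  have hargle : |Complex.arg lam| ≤ π/2 := le_trans harg hωlt.le
  have habs_sin : |Real.sin (Complex.arg lam)| = Real.sin |Complex.arg lam| := by
    rcases abs_cases (Complex.arg lam) with ⟨h, hpos⟩ | ⟨h, hneg⟩
    · rw [h]
      refine _root_.abs_of_nonneg (Real.sin_nonneg_of_nonneg_of_le_pi hpos ?_)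
      have : Complex.arg lam ≤ |Complex.arg lam| := le_abs_self _
      linarith
    · rw [h, Real.sin_neg]
      refine _root_.abs_of_nonpos (Real.sin_nonpos_of_nonpos_of_neg_pi_le hneg.le ?_)
      have : -(Complex.arg lam) ≤ |Complex.arg lam| := neg_le_abs _
      linarith
  have h1 : |Real.sin (Complex.arg lam)| ≤ Real.sin ω := by
    rw [habs_sin]
    exact Real.sin_le_sin_of_le_of_le_pi_div_two (by linarith [abs_nonneg (Complex.arg lam)])
      hωlt.le harg
  have h2 : Real.cos ω ≤ Real.cos (Complex.arg lam) := by
    have := Real.cos_le_cos_of_nonneg_of_le_pi (abs_nonneg (Complex.arg lam)) (by linarith) harg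
    rwa [Real.cos_abs] at this
  have him : |lam.im| = |Real.sin (Complex.arg lam)| * ‖lam‖ := by
    rw [hsin, abs_div, abs_of_pos habs, div_mul_cancel₀]
    exact habs.ne'
  have hre2 : lam.re = Real.cos (Complex.arg lam) * ‖lam‖ := by
    rw [hcos, div_mul_cancel₀]; exact habs.ne'
  have key : Real.cos ω * |Real.sin (Complex.arg lam)| ≤ Real.sin ω * Real.cos (Complex.arg lam) := by
    calc Real.cos ω * |Real.sin (Complex.arg lam)| ≤ Real.cos ω * Real.sin ω :=
          mul_le_mul_of_nonneg_left h1 hcω.le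
      _ ≤ Real.sin ω * Real.cos (Complex.arg lam) := by
          rw [mul_comm]; exact mul_le_mul_of_nonneg_left h2 hsω
  have step : |Real.sin (Complex.arg lam)| ≤ Real.sin ω / Real.cos ω * Real.cos (Complex.arg lam) := by
    rw [div_mul_eq_mul_div, le_div_iff₀ hcω]
    linarith [key]
  rw [him, hre2, ← mul_assoc]
  exact mul_le_mul_of_nonneg_right step habs.le

-- pointwise bound in terms of max
lemma step1 (β s T : ℝ) (lam : ℂ) (hr : 0 < lam.re) (hm : |lam.im| ≤ T * lam.re)
    (z : ℂ) (hz : 0 ≤ (Complex.exp z).re) :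
    ‖Complex.exp (((1:ℂ) - β) * z) * lam ^ (s:ℂ) * (Complex.exp z + lam)⁻¹‖
      ≤ Real.sqrt (2 + 3*T^2) *
        (Real.exp ((1-β) * z.re) * (‖lam‖) ^ s / max (Real.exp z.re) (‖lam‖)) := by
  have hKpos : (0:ℝ) < 2 + 3*T^2 := by positivity
  have hsK : 0 < Real.sqrt (2 + 3*T^2) := Real.sqrt_pos.mpr hKpos
  have hM : 0 < max (Real.exp z.re) (‖lam‖) :=
    lt_of_lt_of_le (Real.exp_pos _) (le_max_left _ _)
  have hdenne : Complex.exp z + lam ≠ 0 := by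
    intro h0
    have : (Complex.exp z + lam).re = 0 := by rw [h0]; rfl
    rw [Complex.add_re] at this
    linarith
  have hD : 0 < ‖Complex.exp z + lam‖ := norm_pos_iff.mpr hdenne
  have hlow : max (Real.exp z.re) (‖lam‖) ≤
      Real.sqrt (2 + 3*T^2) * ‖Complex.exp z + lam‖ := by
    have := abs_add_lower T (Complex.exp z) lam hz hr hm
    rwa [Complex.norm_exp] at this
  have hinv : (‖Complex.exp z + lam‖)⁻¹ ≤
      Real.sqrt (2 + 3*T^2) / max (Real.exp z.re) (‖lam‖) := by
    rw [inv_eq_one_div, div_le_div_iff₀ hD hM, one_mul]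
    exact hlow
  have h1 : ‖Complex.exp (((1:ℂ) - β) * z)‖ = Real.exp ((1-β) * z.re) := by
    rw [Complex.norm_exp]
    congr 1
    have : ((1:ℂ) - β) = ((1 - β : ℝ) : ℂ) := by push_cast; ring
    rw [this]
    simp [Complex.mul_re]
  have h2 : ‖lam ^ (s:ℂ)‖ ≤ (‖lam‖) ^ s := by
    have := Complex.norm_cpow_le lam (s:ℂ)
    simpa using this
  rw [norm_mul, norm_mul, norm_inv, h1]
  calc Real.exp ((1-β)*z.re) * ‖lam ^ (s:ℂ)‖ * (‖Complex.exp z + lam‖)⁻¹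
      ≤ Real.exp ((1-β)*z.re) * (‖lam‖)^s *
        (Real.sqrt (2 + 3*T^2) / max (Real.exp z.re) (‖lam‖)) := by
        apply mul_le_mul
        · exact mul_le_mul_of_nonneg_left h2 (Real.exp_pos _).le
        · exact hinv
        · positivity
        · positivity
    _ = Real.sqrt (2 + 3*T^2) *
        (Real.exp ((1-β) * z.re) * (‖lam‖) ^ s / max (Real.exp z.re) (‖lam‖)) := by
        ring

-- scalar exp bound
lemma scalar_exp (β s t ℓ : ℝ) (hβ0 : 0 ≤ β) (hβ1 : β ≤ 1) :
    Real.exp ((1-β)*t) * Real.exp (s*ℓ) / max (Real.exp t) (Real.exp ℓ)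
      ≤ Real.exp ((s-β)*ℓ) := by
  have hmax : max (Real.exp t) (Real.exp ℓ) = Real.exp (max t ℓ) := by
    rcases le_total t ℓ with h | h
    · rw [max_eq_right (Real.exp_le_exp.mpr h), max_eq_right h]
    · rw [max_eq_left (Real.exp_le_exp.mpr h), max_eq_left h]
  rw [hmax, ← Real.exp_add, ← Real.exp_sub, Real.exp_le_exp]
  rcases le_total t ℓ with h | h
  · rw [max_eq_right h]; nlinarith
  · rw [max_eq_left h]; nlinarith

lemma den_ne (lam : ℂ) (hr : 0 < lam.re) (z : ℂ) (hz : 0 ≤ (Complex.exp z).re) :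
    Complex.exp z + lam ≠ 0 := by
  intro h0
  have : (Complex.exp z + lam).re = 0 := by rw [h0]; rfl
  rw [Complex.add_re] at this
  linarith

lemma exp_re_nonneg_of_im (z : ℂ) (him : |z.im| ≤ π/2) : 0 ≤ (Complex.exp z).re := by
  rw [Complex.exp_re]
  have := abs_le.mp him
  exact mul_nonneg (Real.exp_pos _).le (Real.cos_nonneg_of_mem_Icc ⟨this.1, this.2⟩)

lemma cont_gen (β s : ℝ) (lam : ℂ) (hr : 0 < lam.re) (φ : ℝ → ℂ) (hφ : Continuous φ)
    (S : Set ℝ) (hS : ∀ y ∈ S, 0 ≤ (Complex.exp (φ y)).re) :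
    ContinuousOn (fun y => ‖Complex.exp (((1:ℂ) - β) * φ y) * lam ^ (s:ℂ) *
      (Complex.exp (φ y) + lam)⁻¹‖) S := by
  have h1 : Continuous fun y => Complex.exp (((1:ℂ)-β) * φ y) :=
    Complex.continuous_exp.comp (continuous_const.mul hφ)
  have h2 : Continuous fun y => Complex.exp (φ y) + lam :=
    (Complex.continuous_exp.comp hφ).add continuous_const
  have h3 : ContinuousOn (fun y => (Complex.exp (φ y) + lam)⁻¹) S :=
    h2.continuousOn.inv₀ fun y hy => den_ne lam hr (φ y) (hS y hy)
  exact continuous_norm.comp_continuousOn (((h1.mul continuous_const).continuousOn).mul h3)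

/-- Verification of the hypotheses of the sinc quadrature theorem for
`F_λ(z) = e^{(1-β)z} λ^s (e^z + λ)⁻¹`:
(a) uniformly bounded vertical line integrals, (b) integrable boundary values on the
two horizontal boundary lines of the band, (c) decay of the vertical line integrals. -/
theorem scalar_integrand_band_integrals
    (β s ω c0 : ℝ) (hβ : β ∈ Set.Ioo 0 1) (hs : s ∈ Set.Ico 0 β)
    (hω0 : 0 ≤ ω) (hωlt : ω < π / 2) (hc0 : 0 < c0) :
    ∃ C : ℝ, 0 < C ∧
      ∀ lam : ℂ, lam ≠ 0 → |Complex.arg lam| ≤ ω → c0 ≤ lam.re →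
        (∀ t : ℝ,
          (∫ y in (-(π / 2))..(π / 2),
            ‖Complex.exp (((1 : ℂ) - β) * (t + y * Complex.I)) * lam ^ (s : ℂ) *
              (Complex.exp ((t : ℂ) + y * Complex.I) + lam)⁻¹‖) ≤ π * C) ∧
        ((∫ y : ℝ,
            (‖Complex.exp (((1 : ℂ) - β) * (y - (π / 2) * Complex.I)) * lam ^ (s : ℂ) *
                (Complex.exp ((y : ℂ) - (π / 2) * Complex.I) + lam)⁻¹‖ +
             ‖Complex.exp (((1 : ℂ) - β) * (y + (π / 2) * Complex.I)) * lam ^ (s : ℂ) *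
                (Complex.exp ((y : ℂ) + (π / 2) * Complex.I) + lam)⁻¹‖))
          ≤ 2 * C * ((β - s)⁻¹ + (1 - β)⁻¹)) ∧
        Tendsto
          (fun t : ℝ => ∫ y in (-(π / 2))..(π / 2),
            ‖Complex.exp (((1 : ℂ) - β) * (t + y * Complex.I)) * lam ^ (s : ℂ) *
              (Complex.exp ((t : ℂ) + y * Complex.I) + lam)⁻¹‖)
          (cocompact ℝ) (nhds 0) := by
  obtain ⟨hβ0, hβ1⟩ := hβ
  obtain ⟨hs0, hsβ⟩ := hs
  have hπ := Real.pi_pos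
  have hβs : 0 < β - s := by linarith
  have h1β : 0 < 1 - β := by linarith
  set T : ℝ := Real.sin ω / Real.cos ω with hTdef
  have hcω : 0 < Real.cos ω := Real.cos_pos_of_mem_Ioo ⟨by linarith, hωlt⟩
  have hsω : 0 ≤ Real.sin ω := Real.sin_nonneg_of_nonneg_of_le_pi hω0 (by linarith)
  have hT0 : 0 ≤ T := div_nonneg hsω hcω.le
  set sK : ℝ := Real.sqrt (2 + 3*T^2) with hsKdef
  have hsK : 0 < sK := Real.sqrt_pos.mpr (by positivity)
  refine ⟨sK * c0 ^ (s - β), mul_pos hsK (Real.rpow_pos_of_pos hc0 _), ?_⟩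
  intro lam hne harg hre
  set C : ℝ := sK * c0 ^ (s - β) with hCdef
  have hC : 0 < C := mul_pos hsK (Real.rpow_pos_of_pos hc0 _)
  have hr : 0 < lam.re := lt_of_lt_of_le hc0 hre
  have hm : |lam.im| ≤ T * lam.re := sector_im_bound ω hω0 hωlt lam hne harg hr
  set L : ℝ := ‖lam‖ with hLdef
  have hL0 : 0 < L := norm_pos_iff.mpr hne
  have hLc0 : c0 ≤ L := le_trans hre (Complex.re_le_norm lam)
  set ℓ : ℝ := Real.log L with hldef
  have hexpl : Real.exp ℓ = L := Real.exp_log hL0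
  have hLs : L ^ s = Real.exp (s * ℓ) := by rw [Real.rpow_def_of_pos hL0, mul_comm]
  have hLsb : Real.exp ((s - β) * ℓ) ≤ c0 ^ (s - β) := by
    rw [show Real.exp ((s - β) * ℓ) = L ^ (s - β) by rw [Real.rpow_def_of_pos hL0, mul_comm]]
    exact Real.rpow_le_rpow_of_nonpos hc0 hLc0 (by linarith)
  -- master pointwise bound
  set B : ℝ → ℝ := fun t => sK * (Real.exp ((1-β)*t) * L ^ s / max (Real.exp t) L) with hBdef
  have key : ∀ z : ℂ, |z.im| ≤ π/2 →
      ‖Complex.exp (((1:ℂ) - β) * z) * lam ^ (s:ℂ) * (Complex.exp z + lam)⁻¹‖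
        ≤ B z.re :=
    fun z him => step1 β s T lam hr hm z (exp_re_nonneg_of_im z him)
  have hB0 : ∀ t, 0 ≤ B t := by
    intro t
    have : 0 < max (Real.exp t) L := lt_of_lt_of_le (Real.exp_pos t) (le_max_left _ _)
    positivity
  have hBC : ∀ t, B t ≤ C := by
    intro t
    rw [hCdef]
    apply mul_le_mul_of_nonneg_left _ hsK.le
    calc Real.exp ((1-β)*t) * L ^ s / max (Real.exp t) L
        = Real.exp ((1-β)*t) * Real.exp (s*ℓ) / max (Real.exp t) (Real.exp ℓ) := by
          rw [hLs, hexpl]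
      _ ≤ Real.exp ((s-β)*ℓ) := scalar_exp β s t ℓ hβ0.le hβ1.le
      _ ≤ c0 ^ (s - β) := hLsb
  -- vertical strip: pointwise bound
  have hmem : ∀ t y : ℝ, |y| ≤ π/2 →
      ‖Complex.exp (((1 : ℂ) - β) * (t + y * Complex.I)) * lam ^ (s : ℂ) *
        (Complex.exp ((t : ℂ) + y * Complex.I) + lam)⁻¹‖ ≤ B t := by
    intro t y hy
    have hzim : ((t:ℂ) + (y:ℂ) * Complex.I).im = y := by simp
    have hzre : ((t:ℂ) + (y:ℂ) * Complex.I).re = t := by simp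
    have h := key ((t:ℂ) + (y:ℂ) * Complex.I) (by rw [hzim]; exact hy)
    rwa [hzre] at h
  have hab : (-(π/2)) ≤ (π/2) := by linarith
  have hcont : ∀ t : ℝ, ContinuousOn (fun y : ℝ =>
      ‖Complex.exp (((1 : ℂ) - β) * (t + y * Complex.I)) * lam ^ (s : ℂ) *
        (Complex.exp ((t : ℂ) + y * Complex.I) + lam)⁻¹‖) (Set.Icc (-(π/2)) (π/2)) := by
    intro t
    apply cont_gen β s lam hr (fun y : ℝ => (t:ℂ) + (y:ℂ) * Complex.I)
      (continuous_const.add (Complex.continuous_ofReal.mul continuous_const))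
    intro y hy
    apply exp_re_nonneg_of_im
    have : ((t:ℂ) + (y:ℂ) * Complex.I).im = y := by simp
    rw [this]
    exact abs_le.mpr ⟨hy.1, hy.2⟩
  have hIle : ∀ t : ℝ,
      (∫ y in (-(π / 2))..(π / 2),
        ‖Complex.exp (((1 : ℂ) - β) * (t + y * Complex.I)) * lam ^ (s : ℂ) *
          (Complex.exp ((t : ℂ) + y * Complex.I) + lam)⁻¹‖) ≤ π * B t := by
    intro t
    have hint1 : IntervalIntegrable (fun y : ℝ =>
        ‖Complex.exp (((1 : ℂ) - β) * (t + y * Complex.I)) * lam ^ (s : ℂ) *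
          (Complex.exp ((t : ℂ) + y * Complex.I) + lam)⁻¹‖) volume (-(π/2)) (π/2) := by
      apply ContinuousOn.intervalIntegrable
      rw [Set.uIcc_of_le hab]
      exact hcont t
    calc (∫ y in (-(π / 2))..(π / 2),
        ‖Complex.exp (((1 : ℂ) - β) * (t + y * Complex.I)) * lam ^ (s : ℂ) *
          (Complex.exp ((t : ℂ) + y * Complex.I) + lam)⁻¹‖)
        ≤ ∫ _ in (-(π / 2))..(π / 2), B t := by
          apply intervalIntegral.integral_mono_on hab hint1 intervalIntegrable_const
          intro y hy
          exact hmem t y (abs_le.mpr ⟨hy.1, hy.2⟩)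
      _ = π * B t := by
          rw [intervalIntegral.integral_const, smul_eq_mul]
          ring_nf
  have hI0 : ∀ t : ℝ, 0 ≤ (∫ y in (-(π / 2))..(π / 2),
      ‖Complex.exp (((1 : ℂ) - β) * (t + y * Complex.I)) * lam ^ (s : ℂ) *
        (Complex.exp ((t : ℂ) + y * Complex.I) + lam)⁻¹‖) := by
    intro t
    apply intervalIntegral.integral_nonneg hab
    intro y _
    exact norm_nonneg _
  refine ⟨?_, ?_, ?_⟩
  -- (a)
  · intro t
    exact (hIle t).trans (mul_le_mul_of_nonneg_left (hBC t) hπ.le)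
  -- (b)
  · have hb1 : ∀ y : ℝ, ‖Complex.exp (((1 : ℂ) - β) * (y - (π / 2) * Complex.I)) *
        lam ^ (s : ℂ) * (Complex.exp ((y : ℂ) - (π / 2) * Complex.I) + lam)⁻¹‖ ≤ B y := by
      intro y
      have him : ((y:ℂ) - (π / 2) * Complex.I).im = -(π/2) := by simp
      have hre2 : ((y:ℂ) - (π / 2) * Complex.I).re = y := by simp
      have h := key ((y:ℂ) - (π / 2) * Complex.I)
        (by rw [him, abs_neg, _root_.abs_of_nonneg (by positivity)])
      rwa [hre2] at h
    have hb2 : ∀ y : ℝ, ‖Complex.exp (((1 : ℂ) - β) * (y + (π / 2) * Complex.I)) *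
        lam ^ (s : ℂ) * (Complex.exp ((y : ℂ) + (π / 2) * Complex.I) + lam)⁻¹‖ ≤ B y := by
      intro y
      have him : ((y:ℂ) + (π / 2) * Complex.I).im = π/2 := by simp
      have hre2 : ((y:ℂ) + (π / 2) * Complex.I).re = y := by simp
      have h := key ((y:ℂ) + (π / 2) * Complex.I)
        (by rw [him, _root_.abs_of_nonneg (by positivity)])
      rwa [hre2] at h
    have hB1 : ∀ y, B y ≤ (sK * Real.exp ((s-1)*ℓ)) * Real.exp ((1-β)*y) := by
      intro y
      calc B y ≤ sK * (Real.exp ((1-β)*y) * L ^ s / L) := by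
            apply mul_le_mul_of_nonneg_left _ hsK.le
            gcongr
            exact le_max_right _ _
        _ = sK * (Real.exp ((1-β)*y) * Real.exp (s*ℓ) / Real.exp ℓ) := by rw [hLs, hexpl]
        _ = (sK * Real.exp ((s-1)*ℓ)) * Real.exp ((1-β)*y) := by
            rw [show Real.exp ((1-β)*y) * Real.exp (s*ℓ) / Real.exp ℓ
                = Real.exp ((1-β)*y + s*ℓ - ℓ) by rw [← Real.exp_add, ← Real.exp_sub],
              show (1-β)*y + s*ℓ - ℓ = (s-1)*ℓ + ((1-β)*y) by ring, Real.exp_add]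
            ring
    have hB2 : ∀ y, ℓ ≤ y → B y ≤ sK * Real.exp (-((β-s)*y)) := by
      intro y hy
      calc B y ≤ sK * (Real.exp ((1-β)*y) * L ^ s / Real.exp y) := by
            apply mul_le_mul_of_nonneg_left _ hsK.le
            gcongr
            exact le_max_left _ _
        _ = sK * (Real.exp ((1-β)*y) * Real.exp (s*ℓ) / Real.exp y) := by rw [hLs]
        _ ≤ sK * (Real.exp ((1-β)*y) * Real.exp (s*y) / Real.exp y) := by
            apply mul_le_mul_of_nonneg_left _ hsK.le
            gcongr
        _ = sK * Real.exp (-((β-s)*y)) := by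
            rw [show Real.exp ((1-β)*y) * Real.exp (s*y) / Real.exp y
                = Real.exp ((1-β)*y + s*y - y) by rw [← Real.exp_add, ← Real.exp_sub],
              show (1-β)*y + s*y - y = -((β-s)*y) by ring]
    set F : ℝ → ℝ := fun y : ℝ =>
      ‖Complex.exp (((1 : ℂ) - β) * (y - (π / 2) * Complex.I)) * lam ^ (s : ℂ) *
          (Complex.exp ((y : ℂ) - (π / 2) * Complex.I) + lam)⁻¹‖ +
      ‖Complex.exp (((1 : ℂ) - β) * (y + (π / 2) * Complex.I)) * lam ^ (s : ℂ) *
          (Complex.exp ((y : ℂ) + (π / 2) * Complex.I) + lam)⁻¹‖ with hFdef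
    have hFc : Continuous F := by
      have c1 := cont_gen β s lam hr (fun y : ℝ => (y:ℂ) - (π / 2) * Complex.I)
        (Complex.continuous_ofReal.sub continuous_const) Set.univ
        (fun y _ => exp_re_nonneg_of_im _ (by
          rw [show ((y:ℂ) - (π / 2) * Complex.I).im = -(π/2) by simp, abs_neg,
            _root_.abs_of_nonneg (by positivity)]))
      have c2 := cont_gen β s lam hr (fun y : ℝ => (y:ℂ) + (π / 2) * Complex.I)
        (Complex.continuous_ofReal.add continuous_const) Set.univ
        (fun y _ => exp_re_nonneg_of_im _ (by
          rw [show ((y:ℂ) + (π / 2) * Complex.I).im = π/2 by simp,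
            _root_.abs_of_nonneg (by positivity)]))
      rw [← continuousOn_univ]
      exact c1.add c2
    have hF2B : ∀ y, F y ≤ 2 * B y := by
      intro y
      have h1 := hb1 y
      have h2 := hb2 y
      rw [hFdef]
      dsimp only
      linarith
    have hF0 : ∀ y, 0 ≤ F y := fun y => add_nonneg (norm_nonneg _) (norm_nonneg _)
    have hFg1 : ∀ y, F y ≤ (2*sK*Real.exp ((s-1)*ℓ)) * Real.exp ((1-β)*y) := by
      intro y
      calc F y ≤ 2 * B y := hF2B y
        _ ≤ 2 * ((sK * Real.exp ((s-1)*ℓ)) * Real.exp ((1-β)*y)) := by linarith [hB1 y]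
        _ = (2*sK*Real.exp ((s-1)*ℓ)) * Real.exp ((1-β)*y) := by ring
    have hFg2 : ∀ y, ℓ ≤ y → F y ≤ (2*sK) * Real.exp (-((β-s)*y)) := by
      intro y hy
      calc F y ≤ 2 * B y := hF2B y
        _ ≤ 2 * (sK * Real.exp (-((β-s)*y))) := by linarith [hB2 y hy]
        _ = (2*sK) * Real.exp (-((β-s)*y)) := by ring
    have hg1int : Integrable (fun y : ℝ => (2*sK*Real.exp ((s-1)*ℓ)) * Real.exp ((1-β)*y))
        (volume.restrict (Iic ℓ)) := (exp_intOn_Iic ℓ (1-β) h1β).const_mul _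
    have hg2int : Integrable (fun y : ℝ => (2*sK) * Real.exp (-((β-s)*y)))
        (volume.restrict (Ioi ℓ)) := by
      have h0 : (fun y : ℝ => (2*sK) * Real.exp (-((β-s)*y)))
          = fun y : ℝ => (2*sK) * Real.exp (-(β-s)*y) := by
        funext y; rw [neg_mul]
      rw [h0]
      exact (exp_neg_integrableOn_Ioi ℓ hβs).const_mul (2*sK)
    have hF1int : IntegrableOn F (Iic ℓ) := by
      apply Integrable.mono' hg1int (hFc.aestronglyMeasurable.restrict)
      refine ae_of_all _ fun y => ?_
      rw [Real.norm_eq_abs, _root_.abs_of_nonneg (hF0 y)]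
      exact hFg1 y
    have hF2int : IntegrableOn F (Ioi ℓ) := by
      apply Integrable.mono' hg2int (hFc.aestronglyMeasurable.restrict)
      refine (ae_restrict_iff' measurableSet_Ioi).mpr (ae_of_all _ fun y hy => ?_)
      rw [Real.norm_eq_abs, _root_.abs_of_nonneg (hF0 y)]
      exact hFg2 y (le_of_lt hy)
    have hsplit : (∫ y, F y) = (∫ y in Iic ℓ, F y) + ∫ y in Ioi ℓ, F y :=
      (intervalIntegral.integral_Iic_add_Ioi hF1int hF2int).symm
    have hexpc : Real.exp ((s-1)*ℓ) * Real.exp ((1-β)*ℓ) = Real.exp ((s-β)*ℓ) := by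
      rw [← Real.exp_add]; congr 1; ring
    have hle1 : (∫ y in Iic ℓ, F y) ≤ 2 * C * (1-β)⁻¹ := by
      calc (∫ y in Iic ℓ, F y)
          ≤ ∫ y in Iic ℓ, (2*sK*Real.exp ((s-1)*ℓ)) * Real.exp ((1-β)*y) :=
            setIntegral_mono_on hF1int hg1int measurableSet_Iic (fun y _ => hFg1 y)
        _ = (2*sK*Real.exp ((s-1)*ℓ)) * (Real.exp ((1-β)*ℓ)/(1-β)) := by
            rw [MeasureTheory.integral_const_mul, exp_int_Iic ℓ (1-β) h1β]
        _ = 2*sK*(Real.exp ((s-1)*ℓ) * Real.exp ((1-β)*ℓ)) * (1-β)⁻¹ := by ring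
        _ = 2*sK*Real.exp ((s-β)*ℓ) * (1-β)⁻¹ := by rw [hexpc]
        _ ≤ 2*sK*(c0 ^ (s-β)) * (1-β)⁻¹ := by
            apply mul_le_mul_of_nonneg_right _ (by positivity)
            apply mul_le_mul_of_nonneg_left hLsb (by positivity)
        _ = 2 * C * (1-β)⁻¹ := by rw [hCdef]; ring
    have hle2 : (∫ y in Ioi ℓ, F y) ≤ 2 * C * (β-s)⁻¹ := by
      calc (∫ y in Ioi ℓ, F y)
          ≤ ∫ y in Ioi ℓ, (2*sK) * Real.exp (-((β-s)*y)) :=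
            setIntegral_mono_on hF2int hg2int measurableSet_Ioi
              (fun y hy => hFg2 y (le_of_lt hy))
        _ = (2*sK) * (Real.exp (-((β-s)*ℓ))/(β-s)) := by
            rw [MeasureTheory.integral_const_mul, exp_int_Ioi ℓ (β-s) hβs]
        _ = 2*sK*Real.exp ((s-β)*ℓ) * (β-s)⁻¹ := by
            rw [show -((β-s)*ℓ) = (s-β)*ℓ by ring]; ring
        _ ≤ 2*sK*(c0 ^ (s-β)) * (β-s)⁻¹ := by
            apply mul_le_mul_of_nonneg_right _ (by positivity)
            apply mul_le_mul_of_nonneg_left hLsb (by positivity)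
        _ = 2 * C * (β-s)⁻¹ := by rw [hCdef]; ring
    calc (∫ y, F y) = (∫ y in Iic ℓ, F y) + ∫ y in Ioi ℓ, F y := hsplit
      _ ≤ 2 * C * (1-β)⁻¹ + 2 * C * (β-s)⁻¹ := add_le_add hle1 hle2
      _ = 2 * C * ((β-s)⁻¹ + (1-β)⁻¹) := by ring
  -- (c)
  · have hBbot : ∀ t, B t ≤ (sK * L ^ s / L) * Real.exp ((1-β)*t) := by
      intro t
      calc B t ≤ sK * (Real.exp ((1-β)*t) * L ^ s / L) := by
            apply mul_le_mul_of_nonneg_left _ hsK.le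
            gcongr
            exact le_max_right _ _
        _ = (sK * L ^ s / L) * Real.exp ((1-β)*t) := by ring
    have hBtop : ∀ t, B t ≤ (sK * L ^ s) * Real.exp (-(β*t)) := by
      intro t
      calc B t ≤ sK * (Real.exp ((1-β)*t) * L ^ s / Real.exp t) := by
            apply mul_le_mul_of_nonneg_left _ hsK.le
            gcongr
            exact le_max_left _ _
        _ = (sK * L ^ s) * (Real.exp ((1-β)*t) / Real.exp t) := by ring
        _ = (sK * L ^ s) * Real.exp (-(β*t)) := by
            rw [← Real.exp_sub, show (1-β)*t - t = -(β*t) by ring]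
    rw [cocompact_eq_atBot_atTop, tendsto_sup]
    constructor
    · have hlim : Tendsto (fun t : ℝ => (π * (sK * L ^ s / L)) * Real.exp ((1-β)*t))
          atBot (nhds 0) := by
        have he : Tendsto (fun t : ℝ => Real.exp ((1-β)*t)) atBot (nhds 0) :=
          Real.tendsto_exp_atBot.comp (Tendsto.const_mul_atBot h1β tendsto_id)
        simpa using he.const_mul (π * (sK * L ^ s / L))
      refine squeeze_zero hI0 (fun t => (hIle t).trans ?_) hlim
      calc π * B t ≤ π * ((sK * L ^ s / L) * Real.exp ((1-β)*t)) :=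
            mul_le_mul_of_nonneg_left (hBbot t) hπ.le
        _ = (π * (sK * L ^ s / L)) * Real.exp ((1-β)*t) := by ring
    · have hlim : Tendsto (fun t : ℝ => (π * (sK * L ^ s)) * Real.exp (-(β*t)))
          atTop (nhds 0) := by
        have hneg : Tendsto (fun t : ℝ => -(β*t)) atTop atBot :=
          tendsto_neg_atTop_atBot.comp (Tendsto.const_mul_atTop hβ0 tendsto_id)
        have he : Tendsto (fun t : ℝ => Real.exp (-(β*t))) atTop (nhds 0) :=
          Real.tendsto_exp_atBot.comp hneg
        simpa using he.const_mul (π * (sK * L ^ s))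
      refine squeeze_zero hI0 (fun t => (hIle t).trans ?_) hlim
      calc π * B t ≤ π * ((sK * L ^ s) * Real.exp (-(β*t))) :=
            mul_le_mul_of_nonneg_left (hBtop t) hπ.le
        _ = (π * (sK * L ^ s)) * Real.exp (-(β*t)) := by ring
end

section
/- Let β ∈ (0,1) and let λ ∈ ℂ with Re λ > 0. Then the function μ ↦ μ^{-β} (μ + λ)^{-1} is Lebesgue integrable on (0, ∞) and λ^{-β} = (sin(πβ)/π) ∫_0^∞ μ^{-β} (μ + λ)^{-1} dμ, where λ^{-β} denotes the principal power exp(-β · Log λ). -/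
open Real Complex MeasureTheory Set

lemma bal_re_pos {lam : ℂ} (hlam : 0 < lam.re) {μ : ℝ} (hμ : 0 ≤ μ) :
    0 < ((μ : ℂ) + lam).re := by
  rw [Complex.add_re, Complex.ofReal_re]; linarith

lemma bal_ne_zero {lam : ℂ} (hlam : 0 < lam.re) {μ : ℝ} (hμ : 0 ≤ μ) : (μ : ℂ) + lam ≠ 0 := by
  intro h
  have := bal_re_pos hlam hμ
  rw [h] at this; simp at this

lemma bal_real_integrable {p c : ℝ} (hp0 : 0 < p) (hp1 : p < 1) (hc : 0 < c) :
    IntegrableOn (fun μ : ℝ => μ ^ (-p) * (μ + c)⁻¹) (Ioi 0) := by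
  have hmeas : ∀ s : Set ℝ, AEStronglyMeasurable (fun μ : ℝ => μ ^ (-p) * (μ + c)⁻¹)
      (volume.restrict s) := fun s => by
    apply Measurable.aestronglyMeasurable; fun_prop
  have h01 : IntegrableOn (fun μ : ℝ => μ ^ (-p) * (μ + c)⁻¹) (Ioc 0 1) := by
    refine Integrable.mono' (g := fun μ => μ ^ (-p) * c⁻¹) ?_ (hmeas _) ?_
    · exact ((intervalIntegrable_iff_integrableOn_Ioc_of_le zero_le_one).1
        (intervalIntegral.intervalIntegrable_rpow' (by linarith : (-1:ℝ) < -p))).mul_const _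
    · filter_upwards [ae_restrict_mem measurableSet_Ioc] with μ hμ
      have h1 : (0:ℝ) < μ := hμ.1
      have h2 : (0:ℝ) ≤ μ ^ (-p) := (Real.rpow_pos_of_pos h1 _).le
      rw [Real.norm_of_nonneg (by positivity)]
      gcongr
      linarith
  have h1i : IntegrableOn (fun μ : ℝ => μ ^ (-p) * (μ + c)⁻¹) (Ioi 1) := by
    refine Integrable.mono' (g := fun μ => μ ^ (-p - 1))
      (integrableOn_Ioi_rpow_of_lt (by linarith) one_pos) (hmeas _) ?_
    filter_upwards [ae_restrict_mem measurableSet_Ioi] with μ hμ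
    have h1 : (0:ℝ) < μ := lt_trans one_pos hμ
    rw [Real.norm_of_nonneg (by positivity), Real.rpow_sub h1, Real.rpow_one,
      div_eq_mul_inv]
    gcongr
    linarith
  rw [← Ioc_union_Ioi_eq_Ioi (zero_le_one (α := ℝ))]
  exact h01.union h1i

lemma bal_meas (β : ℝ) (lam : ℂ) (s : Set ℝ) :
    AEStronglyMeasurable (fun μ : ℝ => (μ : ℂ) ^ (-β : ℂ) * ((μ : ℂ) + lam)⁻¹)
      (volume.restrict s) := by
  apply Measurable.aestronglyMeasurable; fun_prop

lemma bal_norm_eq {β : ℝ} {lam : ℂ} {μ : ℝ} (hμ : 0 < μ) :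
    ‖(μ : ℂ) ^ (-β : ℂ) * ((μ : ℂ) + lam)⁻¹‖ = μ ^ (-β) * ‖(μ : ℂ) + lam‖⁻¹ := by
  rw [norm_mul, norm_inv]
  congr 1
  rw [Complex.norm_cpow_eq_rpow_re_of_pos hμ]
  simp

lemma bal_integrable {β : ℝ} (hβ : β ∈ Set.Ioo 0 1) {lam : ℂ} (hlam : 0 < lam.re) :
    IntegrableOn (fun μ : ℝ => (μ : ℂ) ^ (-β : ℂ) * ((μ : ℂ) + lam)⁻¹) (Ioi 0) := by
  refine Integrable.mono' (bal_real_integrable hβ.1 hβ.2 hlam) (bal_meas β lam _) ?_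
  filter_upwards [ae_restrict_mem measurableSet_Ioi] with μ hμ
  have hμ0 : (0:ℝ) < μ := hμ
  rw [bal_norm_eq hμ0]
  gcongr
  calc μ + lam.re = ((μ:ℂ) + lam).re := by simp
      _ ≤ ‖(μ:ℂ) + lam‖ := Complex.re_le_norm _


lemma bal_J {β : ℝ} (hβ : β ∈ Set.Ioo 0 1) :
    ∫ t in Ioi (0:ℝ), (t:ℂ) ^ (-β : ℂ) * ((t:ℂ) + 1)⁻¹
      = ((π / Real.sin (π * β) : ℝ) : ℂ) := by
  obtain ⟨hβ0, hβ1⟩ := hβ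
  -- Step 1: value of the Beta integral
  have hB : Complex.betaIntegral (1 - (β:ℂ)) (β:ℂ) = ((π / Real.sin (π * β) : ℝ) : ℂ) := by
    have h1 : Complex.Gamma (1 - (β:ℂ)) * Complex.Gamma (β:ℂ)
        = Complex.Gamma ((1 - (β:ℂ)) + (β:ℂ)) * Complex.betaIntegral (1 - (β:ℂ)) (β:ℂ) :=
      Complex.Gamma_mul_Gamma_eq_betaIntegral (by simp [Complex.sub_re]; linarith) (by simpa)
    have h2 : Complex.Gamma (β:ℂ) * Complex.Gamma (1 - (β:ℂ)) = ↑π / Complex.sin (↑π * (β:ℂ)) :=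
      Complex.Gamma_mul_Gamma_one_sub (β:ℂ)
    rw [show (1 - (β:ℂ)) + (β:ℂ) = 1 by ring, Complex.Gamma_one, one_mul] at h1
    rw [← h1, mul_comm, h2]
    rw [show (↑π * (β:ℂ)) = ((π * β : ℝ) : ℂ) by push_cast; ring, ← Complex.ofReal_sin,
      ← Complex.ofReal_div]
  -- Step 2: change of variables t ↦ t/(1+t)
  set f : ℝ → ℝ := fun t => t / (1 + t) with hf
  set g : ℝ → ℂ := fun x => (x:ℂ) ^ (-(β:ℂ)) * (1 - (x:ℂ)) ^ ((β:ℂ) - 1) with hg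
  have himg : f '' Ioi 0 = Ioo (0:ℝ) 1 := by
    ext y
    constructor
    · rintro ⟨t, ht, rfl⟩
      have ht0 : (0:ℝ) < t := ht
      constructor
      · positivity
      · rw [div_lt_one (by linarith)]; linarith
    · rintro ⟨hy0, hy1⟩
      refine ⟨y / (1 - y), ?_, ?_⟩
      · have : (0:ℝ) < 1 - y := by linarith
        exact div_pos hy0 this
      · have h1 : (1:ℝ) - y ≠ 0 := by linarith
        simp only [hf]
        field_simp
        ring
  have hderiv : ∀ t ∈ Ioi (0:ℝ), HasDerivWithinAt f (((1 + t)^2)⁻¹) (Ioi 0) t := by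
    intro t ht
    have ht0 : (0:ℝ) < t := ht
    have h1 : (1:ℝ) + t ≠ 0 := by positivity
    have : HasDerivAt (fun x : ℝ => x / (1 + x)) ((1 * (1 + t) - t * (0 + 1)) / (1 + t) ^ 2) t :=
      (hasDerivAt_id t).div ((hasDerivAt_const t (1:ℝ)).add (hasDerivAt_id t)) h1
    have e : (1 * (1 + t) - t * (0 + 1)) / (1 + t) ^ 2 = ((1 + t) ^ 2)⁻¹ := by ring
    rw [e] at this
    exact this.hasDerivWithinAt
  have hinj : InjOn f (Ioi 0) := by
    intro a ha b hb h
    have ha0 : (0:ℝ) < a := ha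
    have hb0 : (0:ℝ) < b := hb
    have h1 : (1:ℝ) + a ≠ 0 := by positivity
    have h2 : (1:ℝ) + b ≠ 0 := by positivity
    rw [hf, div_eq_div_iff h1 h2] at h
    nlinarith [h]
  have hcov := integral_image_eq_integral_abs_deriv_smul measurableSet_Ioi hderiv hinj g
  rw [himg] at hcov
  -- Step 3: identify the Beta integral with the Ioo integral
  have hbeta_eq : Complex.betaIntegral (1 - (β:ℂ)) (β:ℂ) = ∫ x in Ioo (0:ℝ) 1, g x := by
    rw [Complex.betaIntegral, intervalIntegral.integral_of_le zero_le_one,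
      integral_Ioc_eq_integral_Ioo]
    congr 1
    ext x
    rw [hg]
    congr 2
    ring
  -- Step 4: pointwise identification of the transformed integrand
  have hpt : ∀ t ∈ Ioi (0:ℝ),
      |((1 + t)^2)⁻¹| • g (f t) = (t:ℂ) ^ (-β : ℂ) * ((t:ℂ) + 1)⁻¹ := by
    intro t ht
    have ht0 : (0:ℝ) < t := ht
    have hs0 : (0:ℝ) < 1 + t := by linarith
    have habs : |((1 + t)^2)⁻¹| = ((1 + t)^2)⁻¹ := abs_of_nonneg (by positivity)
    simp only [hg, hf, habs]
    have hr : (1 : ℝ) - t / (1 + t) = 1 / (1 + t) := by field_simp; ring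
    have hfr : (1:ℂ) - ((t / (1 + t) : ℝ) : ℂ) = ((1 / (1 + t) : ℝ) : ℂ) := by
      rw [← Complex.ofReal_one, ← Complex.ofReal_sub, hr]
    rw [hfr]
    have e1 : (((t / (1 + t) : ℝ)) : ℂ) ^ (-(β:ℂ)) = ((((t / (1+t)) ^ (-β) : ℝ)) : ℂ) := by
      rw [show (-(β:ℂ)) = ((-β : ℝ) : ℂ) by push_cast; ring,
        ← Complex.ofReal_cpow (by positivity)]
    have e2 : (((1 / (1 + t) : ℝ)) : ℂ) ^ ((β:ℂ) - 1) = ((((1 / (1+t)) ^ (β - 1) : ℝ)) : ℂ) := by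
      rw [show ((β:ℂ) - 1) = ((β - 1 : ℝ) : ℂ) by push_cast; ring,
        ← Complex.ofReal_cpow (by positivity)]
    have e3 : (t:ℂ) ^ (-β : ℂ) = (((t ^ (-β) : ℝ)) : ℂ) := by
      rw [show (-β : ℂ) = ((-β : ℝ) : ℂ) by push_cast; ring,
        ← Complex.ofReal_cpow ht0.le]
    have e4 : ((t:ℂ) + 1)⁻¹ = (((1 + t)⁻¹ : ℝ) : ℂ) := by
      push_cast
      rw [add_comm]
    rw [e1, e2, e3, e4, Complex.real_smul, ← Complex.ofReal_mul, ← Complex.ofReal_mul,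
      ← Complex.ofReal_mul]
    rw [Complex.ofReal_inj]
    -- pure real computation
    have ha : (0:ℝ) < (1+t) ^ (β:ℝ) := Real.rpow_pos_of_pos hs0 _
    rw [Real.div_rpow ht0.le hs0.le, div_rpow (by norm_num) hs0.le,
      Real.one_rpow, Real.rpow_neg ht0.le, Real.rpow_neg hs0.le,
      Real.rpow_sub hs0, Real.rpow_one]
    field_simp
  rw [← hB, hbeta_eq, hcov]
  exact (setIntegral_congr_fun measurableSet_Ioi fun t ht => hpt t ht).symm


lemma bal_real_case {β : ℝ} (hβ : β ∈ Set.Ioo 0 1) {x : ℝ} (hx : 0 < x) :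
    ∫ μ in Ioi (0:ℝ), (μ:ℂ) ^ (-β : ℂ) * ((μ:ℂ) + (x:ℂ))⁻¹
      = ((π / Real.sin (π * β) : ℝ) : ℂ) * (x:ℂ) ^ (-β : ℂ) := by
  have hcomp := integral_comp_mul_left_Ioi
    (g := fun μ : ℝ => (μ:ℂ) ^ (-β : ℂ) * ((μ:ℂ) + (x:ℂ))⁻¹) 0 hx
  rw [mul_zero] at hcomp
  have hxC : (x:ℂ) ≠ 0 := Complex.ofReal_ne_zero.mpr hx.ne'
  have hpt : ∀ t ∈ Ioi (0:ℝ),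
      ((x * t : ℝ):ℂ) ^ (-β : ℂ) * (((x * t : ℝ):ℂ) + (x:ℂ))⁻¹
        = ((x:ℂ) ^ (-β : ℂ) * (x:ℂ)⁻¹) * ((t:ℂ) ^ (-β : ℂ) * ((t:ℂ) + 1)⁻¹) := by
    intro t ht
    have ht0 : (0:ℝ) < t := ht
    have e1 : ((x * t : ℝ):ℂ) ^ (-β : ℂ) = (x:ℂ) ^ (-β : ℂ) * (t:ℂ) ^ (-β : ℂ) := by
      rw [show (-β : ℂ) = ((-β : ℝ) : ℂ) by push_cast; ring,
        ← Complex.ofReal_cpow (by positivity), ← Complex.ofReal_cpow hx.le,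
        ← Complex.ofReal_cpow ht0.le, ← Complex.ofReal_mul, Real.mul_rpow hx.le ht0.le]
    have e2 : ((x * t : ℝ):ℂ) + (x:ℂ) = (x:ℂ) * ((t:ℂ) + 1) := by push_cast; ring
    have h1 : ((t:ℂ) + 1) ≠ 0 := by
      intro h
      have : ((t:ℂ) + 1).re = 0 := by rw [h]; simp
      simp [Complex.add_re] at this
      linarith
    rw [e1, e2, mul_inv]
    ring
  have : (∫ t in Ioi (0:ℝ), (fun μ : ℝ => (μ:ℂ) ^ (-β : ℂ) * ((μ:ℂ) + (x:ℂ))⁻¹) (x * t))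
      = ((x:ℂ) ^ (-β : ℂ) * (x:ℂ)⁻¹) * ∫ t in Ioi (0:ℝ), (t:ℂ) ^ (-β : ℂ) * ((t:ℂ) + 1)⁻¹ := by
    rw [← integral_const_mul]
    refine setIntegral_congr_fun measurableSet_Ioi fun t ht => ?_
    simpa using hpt t ht
  rw [this, bal_J hβ] at hcomp
  simp only [Complex.real_smul, Complex.ofReal_inv] at hcomp
  apply mul_left_cancel₀ (inv_ne_zero hxC)
  rw [← hcomp]
  ring


lemma bal_diff {β : ℝ} (hβ : β ∈ Set.Ioo 0 1) {z : ℂ} (hz : 0 < z.re) :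
    DifferentiableAt ℂ
      (fun lam : ℂ => ∫ μ in Ioi (0:ℝ), (μ:ℂ) ^ (-β : ℂ) * ((μ:ℂ) + lam)⁻¹) z := by
  set ε : ℝ := z.re / 2 with hε
  have hε0 : 0 < ε := by positivity
  set F : ℂ → ℝ → ℂ := fun lam μ => (μ:ℂ) ^ (-β : ℂ) * ((μ:ℂ) + lam)⁻¹ with hF
  set F' : ℂ → ℝ → ℂ := fun lam μ => -((μ:ℂ) ^ (-β : ℂ) * (((μ:ℂ) + lam)^2)⁻¹) with hF'
  have hball : ∀ lam ∈ Metric.ball z ε, ε < lam.re := by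
    intro lam hlam
    have h1 : |(lam - z).re| ≤ ‖lam - z‖ := Complex.abs_re_le_norm _
    rw [Metric.mem_ball, Complex.dist_eq] at hlam
    have h2 := abs_lt.mp (h1.trans_lt hlam)
    simp only [Complex.sub_re] at h2
    have h3 := h2.1
    rw [hε]
    linarith
  have key := hasDerivAt_integral_of_dominated_loc_of_deriv_le (F := F) (F' := F')
    (x₀ := z) (bound := fun μ => ε⁻¹ * (μ ^ (-β) * (μ + ε)⁻¹)) (Metric.ball_mem_nhds z hε0)
    (Filter.Eventually.of_forall fun lam => by
      apply Measurable.aestronglyMeasurable; fun_prop)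
    (bal_integrable hβ hz)
    (by apply Measurable.aestronglyMeasurable; fun_prop)
    ?_ ?_ ?_
  · exact key.2.differentiableAt
  · -- bound
    filter_upwards [ae_restrict_mem measurableSet_Ioi] with μ hμ
    intro lam hlam
    have hμ0 : (0:ℝ) < μ := hμ
    have hre : ε < lam.re := hball lam hlam
    have hne : ((μ:ℂ) + lam) ≠ 0 := bal_ne_zero (by linarith) hμ0.le
    have hnorm : μ + ε ≤ ‖(μ:ℂ) + lam‖ := by
      calc μ + ε ≤ ((μ:ℂ) + lam).re := by simp [Complex.add_re]; linarith
        _ ≤ ‖(μ:ℂ) + lam‖ := Complex.re_le_norm _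
    have hrp : (0:ℝ) ≤ μ ^ (-β) := (Real.rpow_pos_of_pos hμ0 _).le
    simp only [hF', norm_neg, norm_mul, norm_inv, norm_pow]
    have h1 : ‖(μ:ℂ) ^ (-β : ℂ)‖ = μ ^ (-β) := by
      rw [Complex.norm_cpow_eq_rpow_re_of_pos hμ0]
      simp
    rw [h1]
    have h2 : (‖(μ:ℂ) + lam‖^2)⁻¹ ≤ ε⁻¹ * (μ + ε)⁻¹ := by
      rw [← mul_inv]
      apply inv_anti₀ (by positivity)
      have : ε * (μ + ε) ≤ (μ + ε) * (μ + ε) := by nlinarith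
      calc ε * (μ + ε) ≤ (μ + ε) * (μ + ε) := this
        _ ≤ ‖(μ:ℂ) + lam‖ * ‖(μ:ℂ) + lam‖ := by
            apply mul_le_mul hnorm hnorm (by positivity) (norm_nonneg _)
        _ = ‖(μ:ℂ) + lam‖^2 := (sq _).symm
    calc μ ^ (-β) * (‖(μ:ℂ) + lam‖^2)⁻¹ ≤ μ ^ (-β) * (ε⁻¹ * (μ + ε)⁻¹) := by
          exact mul_le_mul_of_nonneg_left h2 hrp
      _ = ε⁻¹ * (μ ^ (-β) * (μ + ε)⁻¹) := by ring
  · -- integrable bound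
    exact (bal_real_integrable hβ.1 hβ.2 hε0).const_mul _
  · -- differentiability
    filter_upwards [ae_restrict_mem measurableSet_Ioi] with μ hμ
    intro lam hlam
    have hμ0 : (0:ℝ) < μ := hμ
    have hre : ε < lam.re := hball lam hlam
    have hne : ((μ:ℂ) + lam) ≠ 0 := bal_ne_zero (by linarith) hμ0.le
    have hd : HasDerivAt (fun y : ℂ => ((μ:ℂ) + y)⁻¹) (-(((μ:ℂ) + lam)^2)⁻¹) lam := by
      have : HasDerivAt (fun y : ℂ => ((μ:ℂ) + y)⁻¹) (-1 / ((μ:ℂ) + lam) ^ 2) lam :=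
        ((hasDerivAt_id lam).const_add (μ:ℂ)).inv hne
      convert this using 1
      field_simp
    have := hd.const_mul ((μ:ℂ) ^ (-β : ℂ))
    have h2 : F' lam μ = (μ:ℂ) ^ (-β : ℂ) * -(((μ:ℂ) + lam) ^ 2)⁻¹ := by
      simp only [hF']
      ring
    rw [h2]
    exact this


/-- Scalar Balakrishnan representation: for `β ∈ (0,1)` and `Re λ > 0`,
`μ ↦ μ^{-β} (μ + λ)⁻¹` is integrable on `(0,∞)` and
`λ^{-β} = (sin(πβ)/π) ∫_0^∞ μ^{-β} (μ + λ)⁻¹ dμ` (principal powers). -/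
theorem scalar_balakrishnan
    (β : ℝ) (hβ : β ∈ Set.Ioo 0 1) (lam : ℂ) (hlam : 0 < lam.re) :
    IntegrableOn (fun μ : ℝ => (μ : ℂ) ^ (-β : ℂ) * ((μ : ℂ) + lam)⁻¹) (Set.Ioi 0) ∧
    lam ^ (-β : ℂ) =
      ((Real.sin (π * β) / π : ℝ) : ℂ) *
        ∫ μ in Set.Ioi (0 : ℝ), (μ : ℂ) ^ (-β : ℂ) * ((μ : ℂ) + lam)⁻¹ := by
  refine ⟨bal_integrable hβ hlam, ?_⟩
  set U : Set ℂ := {z : ℂ | 0 < z.re} with hU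
  have hUopen : IsOpen U := isOpen_lt continuous_const Complex.continuous_re
  have hUconn : IsPreconnected U := (convex_halfSpace_re_gt 0).isPreconnected
  set Fn : ℂ → ℂ := fun lam => ∫ μ in Ioi (0:ℝ), (μ:ℂ) ^ (-β : ℂ) * ((μ:ℂ) + lam)⁻¹ with hFn
  set G : ℂ → ℂ := fun z => ((π / Real.sin (π * β) : ℝ) : ℂ) * z ^ (-β : ℂ) with hG
  have hFa : AnalyticOnNhd ℂ Fn U := by
    apply DifferentiableOn.analyticOnNhd _ hUopen
    exact fun z hz => (bal_diff hβ hz).differentiableWithinAt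
  have hGa : AnalyticOnNhd ℂ G U := by
    apply DifferentiableOn.analyticOnNhd _ hUopen
    intro z hz
    exact (((hasDerivAt_id z).cpow_const (Or.inl hz)).differentiableAt.const_mul
      _).differentiableWithinAt
  have hfreq : ∃ᶠ w in nhdsWithin (1:ℂ) {(1:ℂ)}ᶜ, Fn w = G w := by
    have hseq : Filter.Tendsto (fun n : ℕ => (((1 + (n+1 : ℝ)⁻¹ : ℝ)) : ℂ))
        Filter.atTop (nhdsWithin (1:ℂ) {(1:ℂ)}ᶜ) := by
      apply tendsto_nhdsWithin_of_tendsto_nhds_of_eventually_within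
      · have : Filter.Tendsto (fun n : ℕ => (1 + (n+1 : ℝ)⁻¹ : ℝ)) Filter.atTop (nhds 1) := by
          have h0 : Filter.Tendsto (fun n : ℕ => ((n+1 : ℝ))⁻¹) Filter.atTop (nhds 0) := by
            apply Filter.Tendsto.inv_tendsto_atTop
            exact Filter.tendsto_atTop_add_const_right _ 1 tendsto_natCast_atTop_atTop
          simpa using (tendsto_const_nhds.add h0)
        have h4 := (Complex.continuous_ofReal.tendsto (1:ℝ)).comp this
        simpa [Function.comp_def] using h4
      · apply Filter.Eventually.of_forall
        intro n
        simp only [mem_compl_iff, mem_singleton_iff]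
        intro h
        rw [show (1:ℂ) = ((1:ℝ):ℂ) by norm_num] at h
        have := Complex.ofReal_inj.mp h
        have hp : (0:ℝ) < ((n:ℝ)+1)⁻¹ := by positivity
        linarith
    apply hseq.frequently
    apply Filter.Frequently.of_forall
    intro n
    have hx : (0:ℝ) < 1 + ((n:ℝ)+1)⁻¹ := by positivity
    exact bal_real_case hβ hx
  have heq : EqOn Fn G U :=
    hFa.eqOn_of_preconnected_of_frequently_eq hGa hUconn (by simp [hU]) hfreq
  have hFG : Fn lam = G lam := heq hlam
  have hsin : 0 < Real.sin (π * β) := by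
    apply Real.sin_pos_of_pos_of_lt_pi
    · exact mul_pos Real.pi_pos hβ.1
    · nlinarith [Real.pi_pos, hβ.2]
  have hπ : (π : ℝ) ≠ 0 := Real.pi_ne_zero
  rw [show (∫ μ in Set.Ioi (0 : ℝ), (μ : ℂ) ^ (-β : ℂ) * ((μ : ℂ) + lam)⁻¹) = Fn lam from rfl,
    hFG, hG]
  rw [← mul_assoc, ← Complex.ofReal_mul,
    show Real.sin (π * β) / π * (π / Real.sin (π * β)) = 1 by field_simp,
    Complex.ofReal_one, one_mul]
end

section
/- Let β ∈ (0,1), s ∈ [0, β), ω ∈ [0, π/2) and c0 > 0. For every λ ∈ S_ω with Re λ ≥ c0, every k > 0 and all nonnegative integers N and M: k Σ_{ℓ = N+1}^{∞} e^{(1-β)ℓk} |λ|^s |(e^{ℓk} + λ)^{-1}| ≤ (cos ω)^{-1} (β - s)^{-1} e^{-(β - s) N k}, and k Σ_{ℓ = -∞}^{-M-1} e^{(1-β)ℓk} |λ|^s |(e^{ℓk} + λ)^{-1}| ≤ c0^{s-1} (cos ω)^{-1} (1 - β)^{-1} e^{-(1-β) M k}. -/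
open Real Complex

-- geometric tail bound
lemma tail_bound (a k C : ℝ) (ha : 0 < a) (hk : 0 < k) (hC : 0 ≤ C) (P : ℕ)
    (f : ℕ → ℝ) (hf0 : ∀ j, 0 ≤ f j)
    (hf : ∀ j, f j ≤ C * Real.exp (-a * (((P:ℝ)+1+j)*k))) :
    k * ∑' j, f j ≤ C * a⁻¹ * Real.exp (-a * P * k) := by
  set r : ℝ := Real.exp (-(a*k)) with hr
  have hr0 : 0 < r := Real.exp_pos _
  have hr1 : r < 1 := Real.exp_lt_one_iff.mpr (by nlinarith)
  have hgeq : ∀ j : ℕ, Real.exp (-a * (((P:ℝ)+1+j)*k)) = Real.exp (-a*((P:ℝ)+1)*k) * r ^ j := by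
    intro j
    rw [← Real.exp_nat_mul, ← Real.exp_add]
    ring_nf
  have hgsum : Summable (fun j : ℕ => C * Real.exp (-a * (((P:ℝ)+1+j)*k))) := by
    simp_rw [hgeq]
    exact ((summable_geometric_of_lt_one hr0.le hr1).mul_left _).mul_left _
  have hfsum : Summable f :=
    Summable.of_nonneg_of_le hf0 hf hgsum
  have h1 : ∑' j, f j ≤ ∑' j : ℕ, C * Real.exp (-a * (((P:ℝ)+1+j)*k)) :=
    Summable.tsum_le_tsum hf hfsum hgsum
  have h2 : ∑' j : ℕ, C * Real.exp (-a * (((P:ℝ)+1+j)*k))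
      = C * Real.exp (-a*((P:ℝ)+1)*k) * (1 - r)⁻¹ := by
    simp_rw [hgeq, ← mul_assoc]
    rw [tsum_mul_left, tsum_geometric_of_lt_one hr0.le hr1]
  have hexp : Real.exp (-a*((P:ℝ)+1)*k) = Real.exp (-a * P * k) * r := by
    rw [hr, ← Real.exp_add]; ring_nf
  have key : k * r * a ≤ 1 - r := by
    have h3 : a * k + 1 ≤ Real.exp (a*k) := Real.add_one_le_exp _
    have h4 : Real.exp (a*k) * r = 1 := by rw [hr, ← Real.exp_add]; simp
    nlinarith
  calc k * ∑' j, f j ≤ k * (C * Real.exp (-a*((P:ℝ)+1)*k) * (1 - r)⁻¹) := by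
        rw [← h2]; exact mul_le_mul_of_nonneg_left h1 hk.le
    _ ≤ C * a⁻¹ * Real.exp (-a * P * k) := by
        rw [hexp]
        have h1r : 0 < 1 - r := by linarith
        have hfin : k * r * (1 - r)⁻¹ ≤ a⁻¹ := by
          rw [← div_eq_mul_inv, ← one_div, div_le_div_iff₀ h1r ha]
          nlinarith
        calc k * (C * (Real.exp (-a * P * k) * r) * (1 - r)⁻¹)
            = C * Real.exp (-a * P * k) * (k * r * (1 - r)⁻¹) := by ring
          _ ≤ C * Real.exp (-a * P * k) * a⁻¹ := by
              exact mul_le_mul_of_nonneg_left hfin (by positivity)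
          _ = C * a⁻¹ * Real.exp (-a * P * k) := by ring

/-- Scalar truncation (tail) bounds from Step 1 of the proof of Theorem 3.2:
the upper tail `ℓ ≥ N+1` and lower tail `ℓ ≤ -M-1` of the sinc quadrature sum
are bounded by `(cos ω)⁻¹ (β-s)⁻¹ e^{-(β-s)Nk}` and
`c0^{s-1} (cos ω)⁻¹ (1-β)⁻¹ e^{-(1-β)Mk}` respectively. -/
theorem scalar_sinc_tail_bounds
    (β s ω c0 : ℝ) (hβ : β ∈ Set.Ioo 0 1) (hs : s ∈ Set.Ico 0 β)
    (hω0 : 0 ≤ ω) (hωlt : ω < π / 2) (hc0 : 0 < c0)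
    (lam : ℂ) (hlam : lam ≠ 0) (harg : |Complex.arg lam| ≤ ω) (hre : c0 ≤ lam.re)
    (k : ℝ) (hk : 0 < k) (N M : ℕ) :
    (k * ∑' j : ℕ,
        Real.exp ((1 - β) * (((N : ℝ) + 1 + j) * k)) * ‖lam‖ ^ s *
          ‖(Complex.exp (((((N : ℝ) + 1 + j) * k : ℝ)) : ℂ) + lam)⁻¹‖
      ≤ (Real.cos ω)⁻¹ * (β - s)⁻¹ * Real.exp (-(β - s) * N * k)) ∧
    (k * ∑' j : ℕ,
        Real.exp ((1 - β) * ((-((M : ℝ) + 1 + j)) * k)) * ‖lam‖ ^ s *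
          ‖(Complex.exp ((((-((M : ℝ) + 1 + j)) * k : ℝ)) : ℂ) + lam)⁻¹‖
      ≤ c0 ^ (s - 1) * (Real.cos ω)⁻¹ * (1 - β)⁻¹ * Real.exp (-(1 - β) * M * k)) := by
  obtain ⟨hβ0, hβ1⟩ := hβ
  obtain ⟨hs0, hsβ⟩ := hs
  have hcos : 0 < Real.cos ω := Real.cos_pos_of_mem_Ioo ⟨by linarith [Real.pi_pos], hωlt⟩
  set L : ℝ := ‖lam‖ with hLdef
  have hL : 0 < L := norm_pos_iff.mpr hlam
  have hcosarg : Real.cos ω ≤ Real.cos (Complex.arg lam) := by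
    rw [← Real.cos_abs (Complex.arg lam)]
    exact Real.cos_le_cos_of_nonneg_of_le_pi (abs_nonneg _) (by linarith [Real.pi_pos]) harg
  have hLre : L * Real.cos ω ≤ lam.re := by
    have h := Complex.cos_arg hlam
    have : Real.cos (Complex.arg lam) * L = lam.re := by
      rw [h, hLdef]; field_simp [norm_ne_zero_iff.mpr hlam]
    nlinarith
  have hreL : lam.re ≤ L := Complex.re_le_norm lam
  have habs : ∀ x : ℝ, Real.exp x + lam.re ≤ ‖Complex.exp (x : ℂ) + lam‖ := by
    intro x
    have h := Complex.re_le_norm (Complex.exp (x : ℂ) + lam)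
    rwa [Complex.add_re, Complex.exp_ofReal_re] at h
  have hLs : (0:ℝ) < L ^ s := Real.rpow_pos_of_pos hL s
  constructor
  · -- upper tail
    apply tail_bound (β - s) k (Real.cos ω)⁻¹ (by linarith) hk (by positivity) N
    · intro j; positivity
    · intro j
      set x : ℝ := ((N : ℝ) + 1 + j) * k with hx
      have hex : Real.exp ((1-s)*x) * L ^ s ≤ Real.exp x + L := by
        set m : ℝ := max (Real.exp x) L with hm
        have hm0 : 0 < m := lt_max_of_lt_left (Real.exp_pos x)
        have h1 : Real.exp ((1-s)*x) ≤ m ^ (1-s) := by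
          rw [mul_comm, Real.exp_mul]
          exact Real.rpow_le_rpow (Real.exp_pos x).le (le_max_left _ _) (by linarith)
        have h2 : L ^ s ≤ m ^ s :=
          Real.rpow_le_rpow hL.le (le_max_right _ _) hs0
        have h3 : Real.exp ((1-s)*x) * L ^ s ≤ m ^ (1-s) * m ^ s := by
          apply mul_le_mul h1 h2 (by positivity) (by positivity)
        have h4 : m ^ (1-s) * m ^ s = m := by
          rw [← Real.rpow_add hm0]; norm_num
        rw [h4] at h3
        exact h3.trans (max_le (le_add_of_nonneg_right hL.le)
          (le_add_of_nonneg_left (Real.exp_pos x).le))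
      have hA : Real.cos ω * (Real.exp ((1-s)*x) * L ^ s)
          ≤ ‖Complex.exp (x : ℂ) + lam‖ := by
        have h5 : Real.cos ω * (Real.exp ((1-s)*x) * L ^ s) ≤ Real.cos ω * (Real.exp x + L) :=
          mul_le_mul_of_nonneg_left hex hcos.le
        have h6 : Real.cos ω * (Real.exp x + L) ≤ Real.exp x + lam.re := by
          have := Real.cos_le_one ω
          nlinarith [Real.exp_pos x]
        exact h5.trans (h6.trans (habs x))
      have hApos : (0:ℝ) < Real.cos ω * (Real.exp ((1-s)*x) * L ^ s) := by positivity
      calc Real.exp ((1-β)*x) * L ^ s * ‖(Complex.exp (x : ℂ) + lam)⁻¹‖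
          = Real.exp ((1-β)*x) * L ^ s * (‖Complex.exp (x : ℂ) + lam‖)⁻¹ := by
            rw [norm_inv]
        _ ≤ Real.exp ((1-β)*x) * L ^ s * (Real.cos ω * (Real.exp ((1-s)*x) * L ^ s))⁻¹ := by
            apply mul_le_mul_of_nonneg_left _ (by positivity)
            exact inv_anti₀ hApos hA
        _ = (Real.cos ω)⁻¹ * (Real.exp ((1-β)*x) * (Real.exp ((1-s)*x))⁻¹) := by
            field_simp
        _ = (Real.cos ω)⁻¹ * Real.exp (-(β-s) * x) := by
            rw [← Real.exp_neg, ← Real.exp_add]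
            ring_nf
  · -- lower tail
    apply tail_bound (1 - β) k (c0 ^ (s-1) * (Real.cos ω)⁻¹) (by linarith) hk (by positivity) M
    · intro j; positivity
    · intro j
      set x : ℝ := -((M : ℝ) + 1 + j) * k with hx
      have hA : Real.cos ω * L ≤ ‖Complex.exp (x : ℂ) + lam‖ := by
        have : Real.cos ω * L ≤ Real.exp x + lam.re := by
          nlinarith [Real.exp_pos x]
        exact this.trans (habs x)
      have hApos : (0:ℝ) < Real.cos ω * L := by positivity
      have hLc0 : L ^ (s-1) ≤ c0 ^ (s-1) :=
        Real.rpow_le_rpow_of_nonpos hc0 (hre.trans hreL) (by linarith)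
      calc Real.exp ((1-β)*x) * L ^ s * ‖(Complex.exp (x : ℂ) + lam)⁻¹‖
          = Real.exp ((1-β)*x) * L ^ s * (‖Complex.exp (x : ℂ) + lam‖)⁻¹ := by
            rw [norm_inv]
        _ ≤ Real.exp ((1-β)*x) * L ^ s * (Real.cos ω * L)⁻¹ := by
            apply mul_le_mul_of_nonneg_left _ (by positivity)
            exact inv_anti₀ hApos hA
        _ = L ^ (s-1) * (Real.cos ω)⁻¹ * Real.exp ((1-β)*x) := by
            rw [Real.rpow_sub hL, Real.rpow_one]
            field_simp
        _ ≤ c0 ^ (s-1) * (Real.cos ω)⁻¹ * Real.exp ((1-β)*x) := by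
            apply mul_le_mul_of_nonneg_right _ (Real.exp_pos _).le
            exact mul_le_mul_of_nonneg_right hLc0 (by positivity)
        _ = c0 ^ (s-1) * (Real.cos ω)⁻¹ * Real.exp (-(1-β) * (((M:ℝ)+1+j)*k)) := by
            rw [hx]; ring_nf
end

section
/- Let 𝒜 be a unital C*-algebra, c0 > 0, and let a ∈ 𝒜 be a selfadjoint element whose spectrum is contained in [c0, ∞). Let β ∈ (0,1). Then for every μ ≥ 0 the element μ·1 + a is invertible, the function μ ↦ μ^{-β} (μ·1 + a)^{-1} is Bochner integrable on (0, ∞) with respect to Lebesgue measure, and a^{-β} = (sin(πβ)/π) ∫_0^∞ μ^{-β} (μ·1 + a)^{-1} dμ. -/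
open Real MeasureTheory Set
set_option maxHeartbeats 1000000

lemma beta_Ioo {β : ℝ} (hβ : β ∈ Set.Ioo 0 1) :
    ∫ u in Set.Ioo (0:ℝ) 1, u ^ (-β) * (1-u) ^ (β-1) = π / Real.sin (π*β) := by
  obtain ⟨hβ0, hβ1⟩ := hβ
  have h1 : Complex.betaIntegral (1 - (β:ℂ)) (β:ℂ) = ((π / Real.sin (π*β) : ℝ) : ℂ) := by
    have := Complex.Gamma_mul_Gamma_eq_betaIntegral (s := 1 - (β:ℂ)) (t := (β:ℂ))
      (by simp [Complex.sub_re, Complex.one_re]; linarith) (by simpa using hβ0)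
    rw [show (1 - (β:ℂ)) + β = 1 by ring, Complex.Gamma_one, one_mul] at this
    rw [← this, mul_comm, Complex.Gamma_mul_Gamma_one_sub]
    push_cast
    simp [Complex.ofReal_sin]
  have h2 : (↑(∫ u in (0:ℝ)..1, u ^ (-β) * (1-u) ^ (β-1)) : ℂ)
      = Complex.betaIntegral (1 - (β:ℂ)) (β:ℂ) := by
    rw [Complex.betaIntegral, ← intervalIntegral.integral_ofReal]
    refine intervalIntegral.integral_congr fun x hx => ?_
    rw [Set.uIcc_of_le (by norm_num)] at hx
    obtain ⟨hx0, hx1⟩ := hx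
    push_cast
    rw [show (1:ℂ) - (β:ℂ) - 1 = ((-β : ℝ) : ℂ) by push_cast; ring,
      show (β:ℂ) - 1 = ((β - 1 : ℝ) : ℂ) by push_cast; ring,
      show (1:ℂ) - (x:ℂ) = ((1 - x : ℝ) : ℂ) by push_cast; ring,
      ← Complex.ofReal_cpow hx0, ← Complex.ofReal_cpow (by linarith)]
  have h3 := h1 ▸ h2
  have h4 : (∫ u in (0:ℝ)..1, u ^ (-β) * (1-u) ^ (β-1)) = π / Real.sin (π*β) :=
    Complex.ofReal_injective h3
  rw [← h4, intervalIntegral.integral_of_le (by norm_num),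
    MeasureTheory.integral_Ioc_eq_integral_Ioo]
lemma image_div_one_add : (fun x : ℝ => x / (1 + x)) '' Set.Ioi 0 = Set.Ioo 0 1 := by
  ext u
  constructor
  · rintro ⟨x, hx, rfl⟩
    simp only [Set.mem_Ioi] at hx
    have hx' : (0:ℝ) < 1 + x := by linarith
    simp only [Set.mem_Ioo]
    exact ⟨by positivity, by rw [div_lt_one hx']; linarith⟩
  · rintro ⟨hu0, hu1⟩
    have h1 : (0:ℝ) < 1 - u := by linarith
    refine ⟨u / (1 - u), Set.mem_Ioi.mpr (div_pos hu0 h1), ?_⟩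
    field_simp
    ring

lemma subst_int {β : ℝ} (hβ : β ∈ Set.Ioo 0 1) :
    ∫ x in Set.Ioi (0:ℝ), x ^ (-β) * (1 + x)⁻¹ = π / Real.sin (π * β) := by
  obtain ⟨hβ0, hβ1⟩ := hβ
  have hderiv : ∀ x ∈ Set.Ioi (0:ℝ),
      HasDerivWithinAt (fun x : ℝ => x / (1 + x)) (((1+x)^2)⁻¹) (Set.Ioi 0) x := by
    intro x hx
    simp only [Set.mem_Ioi] at hx
    have hx' : (1:ℝ) + x ≠ 0 := by positivity
    have := (hasDerivAt_id x).div (by simpa using (hasDerivAt_id x).const_add 1) hx'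
    exact (this.congr_deriv (by field_simp; simp)).hasDerivWithinAt
  have hinj : Set.InjOn (fun x : ℝ => x / (1 + x)) (Set.Ioi 0) := by
    intro x hx y hy h
    simp only [Set.mem_Ioi] at hx hy
    have hx' : (1:ℝ) + x ≠ 0 := by positivity
    have hy' : (1:ℝ) + y ≠ 0 := by positivity
    field_simp at h
    linarith
  have key := MeasureTheory.integral_image_eq_integral_abs_deriv_smul measurableSet_Ioi
    hderiv hinj (fun u => u ^ (-β) * (1-u) ^ (β-1))
  rw [image_div_one_add, beta_Ioo ⟨hβ0, hβ1⟩] at key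
  rw [key]
  refine setIntegral_congr_fun measurableSet_Ioi fun x hx => ?_
  simp only [Set.mem_Ioi] at hx
  have h1x : (0:ℝ) < 1 + x := by linarith
  have e1 : 1 - x / (1 + x) = (1 + x)⁻¹ := by field_simp; ring
  have e2 : (x / (1 + x)) ^ (-β) = x ^ (-β) * (1+x) ^ β := by
    rw [Real.div_rpow hx.le h1x.le, Real.rpow_neg h1x.le, div_eq_mul_inv, inv_inv]
  have e3 : ((1+x)⁻¹ : ℝ) ^ (β-1) = (1+x) ^ (1-β) := by
    rw [← Real.rpow_neg_one (1+x), ← Real.rpow_mul h1x.le,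
      show (-1:ℝ) * (β-1) = 1-β by ring]
  have e4 : (((1+x)^2 : ℝ))⁻¹ = (1+x) ^ (-2:ℝ) := by
    rw [← Real.rpow_natCast (1+x) 2, ← Real.rpow_neg h1x.le]
    norm_num
  rw [smul_eq_mul, e1, e2, e3, e4, abs_of_pos (by positivity)]
  calc x ^ (-β) * (1+x)⁻¹ = x ^ (-β) * (1+x) ^ (-1:ℝ) := by rw [Real.rpow_neg_one]
    _ = x ^ (-β) * (1+x) ^ ((-2:ℝ) + β + (1-β)) := by norm_num
    _ = (1+x) ^ (-2:ℝ) * (x ^ (-β) * (1+x) ^ β * (1+x) ^ (1-β)) := by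
        rw [Real.rpow_add h1x, Real.rpow_add h1x]; ring

lemma scalar_formula {β : ℝ} (hβ : β ∈ Set.Ioo 0 1) {t : ℝ} (ht : 0 < t) :
    ∫ μ in Set.Ioi (0:ℝ), μ ^ (-β) * (μ + t)⁻¹ = π / Real.sin (π * β) * t ^ (-β) := by
  have h := MeasureTheory.integral_comp_mul_left_Ioi (fun y => y ^ (-β) * (y + t)⁻¹) 0 ht
  rw [mul_zero] at h
  simp only [smul_eq_mul] at h
  have h2 : (∫ x in Set.Ioi (0:ℝ), (t*x) ^ (-β) * (t*x + t)⁻¹)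
      = t ^ (-β) * t⁻¹ * ∫ x in Set.Ioi (0:ℝ), x ^ (-β) * (1 + x)⁻¹ := by
    rw [← integral_const_mul]
    refine setIntegral_congr_fun measurableSet_Ioi fun x hx => ?_
    simp only [Set.mem_Ioi] at hx
    rw [Real.mul_rpow ht.le hx.le, show t*x + t = t * (1+x) by ring, mul_inv]
    ring
  rw [h2, subst_int hβ] at h
  have ht' : t ≠ 0 := ht.ne'
  have h3 : (∫ μ in Set.Ioi (0:ℝ), μ ^ (-β) * (μ + t)⁻¹)
      = t * (t⁻¹ * ∫ μ in Set.Ioi (0:ℝ), μ ^ (-β) * (μ + t)⁻¹) := by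
    rw [← mul_assoc, mul_inv_cancel₀ ht', one_mul]
  rw [h3, ← h, show t * (t ^ (-β) * t⁻¹ * (π / Real.sin (π*β)))
      = (t * t⁻¹) * (t ^ (-β) * (π / Real.sin (π*β))) by ring,
    mul_inv_cancel₀ ht', one_mul]
  ring

lemma bound_integrable {β c0 : ℝ} (hβ : β ∈ Set.Ioo 0 1) (hc0 : 0 < c0) :
    IntegrableOn (fun μ : ℝ => μ ^ (-β) * (μ + c0)⁻¹) (Set.Ioi 0) := by
  obtain ⟨hβ0, hβ1⟩ := hβ
  have hcont : ContinuousOn (fun μ : ℝ => μ ^ (-β) * (μ + c0)⁻¹) (Set.Ioi 0) := by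
    intro μ hμ
    simp only [Set.mem_Ioi] at hμ
    exact (((Real.continuousAt_rpow_const μ (-β) (Or.inl hμ.ne')).mul
      (ContinuousAt.inv₀ (by fun_prop) (by positivity))).continuousWithinAt)
  rw [show Set.Ioi (0:ℝ) = Set.Ioc 0 1 ∪ Set.Ioi 1 from (Set.Ioc_union_Ioi_eq_Ioi zero_le_one).symm]
  refine IntegrableOn.union ?_ ?_
  · have hbase : IntegrableOn (fun μ : ℝ => μ ^ (-β)) (Set.Ioc 0 1) := by
      have := intervalIntegral.intervalIntegrable_rpow' (a := 0) (b := 1) (r := -β)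
        (by linarith)
      rwa [intervalIntegrable_iff_integrableOn_Ioc_of_le zero_le_one] at this
    refine Integrable.mono' (hbase.const_mul c0⁻¹) ?_ ?_
    · exact (hcont.mono (Set.Ioc_subset_Ioi_self)).aestronglyMeasurable measurableSet_Ioc
    · refine (ae_restrict_iff' measurableSet_Ioc).mpr (Filter.Eventually.of_forall ?_)
      intro μ hμ
      obtain ⟨hμ0, hμ1⟩ := hμ
      have h1 : (μ + c0)⁻¹ ≤ c0⁻¹ := by
        apply inv_anti₀ hc0; linarith
      have h2 : (0:ℝ) ≤ μ ^ (-β) := Real.rpow_nonneg hμ0.le _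
      rw [Real.norm_eq_abs, abs_of_nonneg (by positivity)]
      calc μ ^ (-β) * (μ + c0)⁻¹ ≤ μ ^ (-β) * c0⁻¹ := by
            exact mul_le_mul_of_nonneg_left h1 h2
        _ = c0⁻¹ * μ ^ (-β) := mul_comm _ _
  · have hbase : IntegrableOn (fun μ : ℝ => μ ^ (-β - 1)) (Set.Ioi 1) :=
      integrableOn_Ioi_rpow_of_lt (by linarith) one_pos
    refine Integrable.mono' hbase ?_ ?_
    · exact (hcont.mono (fun x (hx : x ∈ Set.Ioi (1:ℝ)) => (Set.mem_Ioi.mpr (lt_trans one_pos (Set.mem_Ioi.mp hx))))).aestronglyMeasurable measurableSet_Ioi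
    · refine (ae_restrict_iff' measurableSet_Ioi).mpr (Filter.Eventually.of_forall ?_)
      intro μ hμ
      simp only [Set.mem_Ioi] at hμ
      have hμ0 : (0:ℝ) < μ := lt_trans one_pos hμ
      have h1 : (μ + c0)⁻¹ ≤ μ⁻¹ := by
        apply inv_anti₀ hμ0; linarith
      have h2 : (0:ℝ) ≤ μ ^ (-β) := Real.rpow_nonneg hμ0.le _
      rw [Real.norm_eq_abs, abs_of_nonneg (by positivity)]
      calc μ ^ (-β) * (μ + c0)⁻¹ ≤ μ ^ (-β) * μ⁻¹ :=
            mul_le_mul_of_nonneg_left h1 h2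
        _ = μ ^ (-β) * μ ^ (-1:ℝ) := by rw [Real.rpow_neg_one]
        _ = μ ^ (-β - 1) := by rw [← Real.rpow_add hμ0, show -β + -1 = -β - 1 from by ring]

/-- Balakrishnan representation in a unital C*-algebra: if `a` is selfadjoint with
spectrum in `[c0, ∞)`, `c0 > 0`, and `β ∈ (0,1)`, then every `μ·1 + a` (`μ ≥ 0`) is
invertible, `μ ↦ μ^{-β} (μ·1 + a)⁻¹` is Bochner integrable on `(0,∞)`, and
`a^{-β} = (sin(πβ)/π) ∫_0^∞ μ^{-β} (μ·1 + a)⁻¹ dμ`, where fractional powers of `a`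
are given by the continuous functional calculus. -/
theorem cstar_balakrishnan
    (𝒜 : Type*) [CStarAlgebra 𝒜] (c0 : ℝ) (hc0 : 0 < c0)
    (a : 𝒜) (ha : IsSelfAdjoint a) (hspec : spectrum ℝ a ⊆ Set.Ici c0)
    (β : ℝ) (hβ : β ∈ Set.Ioo 0 1) :
    (∀ μ : ℝ, 0 ≤ μ → IsUnit (algebraMap ℝ 𝒜 μ + a)) ∧
    IntegrableOn (fun μ : ℝ => μ ^ (-β) • Ring.inverse (algebraMap ℝ 𝒜 μ + a))
      (Set.Ioi 0) ∧
    cfc (fun t : ℝ => t ^ (-β)) a =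
      (Real.sin (π * β) / π) •
        ∫ μ in Set.Ioi (0 : ℝ), μ ^ (-β) • Ring.inverse (algebraMap ℝ 𝒜 μ + a) := by
  obtain ⟨hβ0, hβ1⟩ := hβ
  have hσ : ∀ t : ℝ, t ∈ spectrum ℝ a → c0 ≤ t := fun t ht => hspec ht
  -- continuity of resolvent-type functions on the spectrum
  have hcont : ∀ μ : ℝ, 0 ≤ μ → ContinuousOn (fun t : ℝ => (μ + t)⁻¹) (spectrum ℝ a) := by
    intro μ hμ
    refine ContinuousOn.inv₀ (by fun_prop) fun t ht => ?_
    have := hσ t ht; exact ne_of_gt (by linarith)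
  -- invertibility and identification of the inverse via cfc
  have hunit : ∀ μ : ℝ, 0 ≤ μ → ∃ h : IsUnit (algebraMap ℝ 𝒜 μ + a),
      Ring.inverse (algebraMap ℝ 𝒜 μ + a) = cfc (fun t : ℝ => (μ + t)⁻¹) a := by
    intro μ hμ
    have hc := hcont μ hμ
    have heq : algebraMap ℝ 𝒜 μ + a = cfc (fun t : ℝ => μ + t) a := by
      rw [cfc_const_add μ (fun t : ℝ => t) a continuousOn_id ha, cfc_id' ℝ a ha]
    have hne : ∀ t ∈ spectrum ℝ a, μ + t ≠ 0 := by
      intro t ht; have := hσ t ht; exact ne_of_gt (by linarith)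
    have h1 : (algebraMap ℝ 𝒜 μ + a) * cfc (fun t : ℝ => (μ + t)⁻¹) a = 1 := by
      rw [heq, ← cfc_mul (fun t : ℝ => μ + t) (fun t : ℝ => (μ + t)⁻¹) a (by fun_prop) hc]
      rw [show (fun t : ℝ => (μ + t) * (μ + t)⁻¹) = fun t : ℝ => (μ+t)*(μ+t)⁻¹ from rfl]
      rw [cfc_congr (g := fun _ : ℝ => (1:ℝ)) (fun t ht => mul_inv_cancel₀ (hne t ht))]
      rw [cfc_const 1 a ha, map_one]
    have h2 : cfc (fun t : ℝ => (μ + t)⁻¹) a * (algebraMap ℝ 𝒜 μ + a) = 1 := by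
      rw [heq, ← cfc_mul (fun t : ℝ => (μ + t)⁻¹) (fun t : ℝ => μ + t) a hc (by fun_prop)]
      rw [cfc_congr (g := fun _ : ℝ => (1:ℝ)) (fun t ht => inv_mul_cancel₀ (hne t ht))]
      rw [cfc_const 1 a ha, map_one]
    refine ⟨⟨⟨algebraMap ℝ 𝒜 μ + a, cfc (fun t : ℝ => (μ + t)⁻¹) a, h1, h2⟩, rfl⟩, ?_⟩
    exact Ring.inverse_unit ⟨algebraMap ℝ 𝒜 μ + a, cfc (fun t : ℝ => (μ + t)⁻¹) a, h1, h2⟩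
  -- the C(σ, ℝ)-valued integrand
  have hGne : ∀ (μ : ℝ) (t : spectrum ℝ a), max μ 0 + (t : ℝ) ≠ 0 := by
    intro μ t
    have h1 : c0 ≤ (t : ℝ) := hσ t t.2
    have h2 : (0:ℝ) ≤ max μ 0 := le_max_right _ _
    exact ne_of_gt (by linarith)
  set G : ℝ → C(spectrum ℝ a, ℝ) := fun μ =>
    ⟨fun t => (max μ 0 + (t : ℝ))⁻¹,
      (continuous_const.add continuous_subtype_val).inv₀ (hGne μ)⟩ with hG
  have hGcont : Continuous G := by
    refine ContinuousMap.continuous_of_continuous_uncurry _ ?_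
    exact ((continuous_fst.max continuous_const).add
      (continuous_subtype_val.comp continuous_snd)).inv₀ fun p => hGne p.1 p.2
  set F : ℝ → C(spectrum ℝ a, ℝ) := fun μ => μ ^ (-β) • G μ with hF
  -- norm bound for G
  have hGnorm : ∀ μ : ℝ, 0 ≤ μ → ‖G μ‖ ≤ (μ + c0)⁻¹ := by
    intro μ hμ
    refine (ContinuousMap.norm_le _ (inv_nonneg.mpr (by linarith))).mpr fun t => ?_
    have h1 : c0 ≤ (t : ℝ) := hσ t t.2
    have h2 : max μ 0 = μ := max_eq_left hμ
    rw [hG]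
    simp only [ContinuousMap.coe_mk, h2, Real.norm_eq_abs]
    rw [abs_of_nonneg (inv_nonneg.mpr (by linarith))]
    exact inv_anti₀ (by linarith) (by linarith)
  -- integrability of F
  have hFmeas : AEStronglyMeasurable F (volume.restrict (Set.Ioi 0)) := by
    refine ContinuousOn.aestronglyMeasurable ?_ measurableSet_Ioi
    refine ContinuousOn.smul (f := fun μ : ℝ => μ ^ (-β)) (g := G) ?_ hGcont.continuousOn
    intro μ hμ
    simp only [Set.mem_Ioi] at hμ
    exact (Real.continuousAt_rpow_const μ (-β) (Or.inl hμ.ne')).continuousWithinAt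
  have hFint : Integrable F (volume.restrict (Set.Ioi 0)) := by
    refine Integrable.mono' (bound_integrable ⟨hβ0, hβ1⟩ hc0) hFmeas ?_
    refine (ae_restrict_iff' measurableSet_Ioi).mpr (Filter.Eventually.of_forall ?_)
    intro μ hμ
    simp only [Set.mem_Ioi] at hμ
    refine (ContinuousMap.norm_le _ (mul_nonneg (Real.rpow_nonneg hμ.le _)
      (inv_nonneg.mpr (by linarith)))).mpr fun t => ?_
    have h1 : c0 ≤ (t:ℝ) := hσ t t.2
    have hFt : (F μ) t = μ ^ (-β) * (μ + (t:ℝ))⁻¹ := by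
      simp only [hF, hG, ContinuousMap.smul_apply, ContinuousMap.coe_mk, smul_eq_mul,
        max_eq_left hμ.le]
    rw [hFt, Real.norm_eq_abs, abs_of_nonneg (mul_nonneg (Real.rpow_nonneg hμ.le _)
      (inv_nonneg.mpr (by linarith)))]
    exact mul_le_mul_of_nonneg_left (inv_anti₀ (by linarith) (by linarith))
      (Real.rpow_nonneg hμ.le _)
  -- identification of cfcL (F μ) with the integrand
  have hFeq : ∀ μ ∈ Set.Ioi (0:ℝ),
      (cfcL ha : C(spectrum ℝ a, ℝ) →L[ℝ] 𝒜) (F μ)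
        = μ ^ (-β) • Ring.inverse (algebraMap ℝ 𝒜 μ + a) := by
    intro μ hμ
    simp only [Set.mem_Ioi] at hμ
    obtain ⟨hu, hinv⟩ := hunit μ hμ.le
    have hGμ : G μ = ⟨(spectrum ℝ a).restrict (fun t : ℝ => (μ + t)⁻¹),
        (hcont μ hμ.le).restrict⟩ := by
      ext t
      simp only [hG, ContinuousMap.coe_mk, max_eq_left hμ.le, Set.restrict_apply]
      rfl
    calc (cfcL ha : C(spectrum ℝ a, ℝ) →L[ℝ] 𝒜) (F μ)
        = μ ^ (-β) • (cfcL ha : C(spectrum ℝ a, ℝ) →L[ℝ] 𝒜) (G μ) :=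
          (cfcL ha).map_smul _ _
      _ = μ ^ (-β) • Ring.inverse (algebraMap ℝ 𝒜 μ + a) := by
          rw [hGμ, hinv, cfc_apply (fun t : ℝ => (μ + t)⁻¹) a ha (hcont μ hμ.le)]
          rfl
  have hint2 : IntegrableOn (fun μ : ℝ => μ ^ (-β) • Ring.inverse (algebraMap ℝ 𝒜 μ + a))
      (Set.Ioi 0) := by
    have := ((cfcL ha : C(spectrum ℝ a, ℝ) →L[ℝ] 𝒜).integrable_comp hFint)
    refine this.congr ?_
    exact (ae_restrict_iff' measurableSet_Ioi).mpr (Filter.Eventually.of_forall hFeq)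
  refine ⟨fun μ hμ => (hunit μ hμ).1, hint2, ?_⟩
  -- the continuous map t ↦ t^{-β} restricted to the spectrum
  have hrcont : ContinuousOn (fun t : ℝ => t ^ (-β)) (spectrum ℝ a) := by
    intro t ht
    have h1 : c0 ≤ t := hσ t ht
    exact (Real.continuousAt_rpow_const t (-β) (Or.inl (by linarith))).continuousWithinAt
  set fβ : C(spectrum ℝ a, ℝ) := ⟨(spectrum ℝ a).restrict (fun t : ℝ => t ^ (-β)),
    hrcont.restrict⟩ with hfβ
  -- compute the C(σ,ℝ)-valued integral pointwise
  have hFsum : ∫ μ in Set.Ioi (0:ℝ), F μ = (π / Real.sin (π * β)) • fβ := by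
    refine ContinuousMap.ext fun t => ?_
    have hev := (ContinuousMap.evalCLM ℝ (M := ℝ) t).integral_comp_comm hFint
    have h1 : c0 ≤ (t : ℝ) := hσ t t.2
    have ht0 : (0:ℝ) < t := by linarith
    have h2 : ∫ μ in Set.Ioi (0:ℝ), (F μ) t = π / Real.sin (π * β) * (t:ℝ) ^ (-β) := by
      rw [← scalar_formula ⟨hβ0, hβ1⟩ ht0]
      refine setIntegral_congr_fun measurableSet_Ioi fun μ hμ => ?_
      simp only [Set.mem_Ioi] at hμ
      rw [hF, hG]
      simp only [ContinuousMap.smul_apply, ContinuousMap.coe_mk, max_eq_left hμ.le,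
        smul_eq_mul]
    calc (∫ μ in Set.Ioi (0:ℝ), F μ) t
        = ∫ μ in Set.Ioi (0:ℝ), (F μ) t := hev.symm
      _ = π / Real.sin (π * β) * (t:ℝ) ^ (-β) := h2
      _ = ((π / Real.sin (π * β)) • fβ) t := by
          rw [hfβ]; simp [smul_eq_mul]; exact Or.inl rfl
  -- put everything together
  have hsin : Real.sin (π * β) ≠ 0 := by
    refine ne_of_gt (Real.sin_pos_of_pos_of_lt_pi ?_ ?_)
    · positivity
    · calc π * β < π * 1 := by
            exact mul_lt_mul_of_pos_left hβ1 Real.pi_pos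
        _ = π := mul_one π
  have hmain : cfc (fun t : ℝ => t ^ (-β)) a
      = (cfcL ha : C(spectrum ℝ a, ℝ) →L[ℝ] 𝒜) fβ := by
    rw [cfc_apply (fun t : ℝ => t ^ (-β)) a ha hrcont]
    rfl
  have hintcomm : ∫ μ in Set.Ioi (0:ℝ), μ ^ (-β) • Ring.inverse (algebraMap ℝ 𝒜 μ + a)
      = (cfcL ha : C(spectrum ℝ a, ℝ) →L[ℝ] 𝒜) (∫ μ in Set.Ioi (0:ℝ), F μ) := by
    rw [← ContinuousLinearMap.integral_comp_comm _ hFint]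
    exact (setIntegral_congr_fun measurableSet_Ioi hFeq).symm
  rw [hmain, hintcomm, hFsum, ContinuousLinearMap.map_smul, smul_smul,
    show Real.sin (π * β) / π * (π / Real.sin (π * β)) = 1 by
      field_simp, one_smul]
end

section
/- Let 𝒜 be a unital C*-algebra, c0 > 0, and let a ∈ 𝒜 be a selfadjoint element whose spectrum is contained in [c0, ∞). Let β ∈ (0,1). Then for every y ∈ ℝ the element e^y·1 + a is invertible, the function y ↦ e^{(1-β)y} (e^y·1 + a)^{-1} is Bochner integrable on ℝ, and a^{-β} = (sin(πβ)/π) ∫_{-∞}^{∞} e^{(1-β)y} (e^y·1 + a)^{-1} dy. -/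
open Real MeasureTheory Set

lemma beta_aux {β : ℝ} (hβ : β ∈ Set.Ioo 0 1) :
    IntegrableOn (fun u : ℝ => u ^ (-β) * (1-u) ^ (β-1)) (Ioo 0 1) ∧
    ∫ u in Ioo (0:ℝ) 1, u ^ (-β) * (1-u) ^ (β-1) = π / Real.sin (π * β) := by
  obtain ⟨hβ0, hβ1⟩ := hβ
  have hre : 0 < ((1 - β : ℝ) : ℂ).re := by simp; linarith
  have hre' : 0 < ((β : ℝ) : ℂ).re := by simpa using hβ0
  have hconv := Complex.betaIntegral_convergent hre hre'
  set F : ℝ → ℂ := fun u => (u:ℂ) ^ (((1-β:ℝ):ℂ) - 1) * ((1:ℂ)-u) ^ (((β:ℝ):ℂ) - 1) with hF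
  have hIoc : IntegrableOn F (Ioc 0 1) := by
    simpa [F, intervalIntegrable_iff_integrableOn_Ioc_of_le zero_le_one] using hconv
  have hIoo : IntegrableOn F (Ioo 0 1) := hIoc.mono_set Ioo_subset_Ioc_self
  have hae : (fun u : ℝ => ((u ^ (-β) * (1-u) ^ (β-1) : ℝ) : ℂ))
      =ᶠ[ae (volume.restrict (Ioo (0:ℝ) 1))] F := by
    filter_upwards [ae_restrict_mem measurableSet_Ioo] with u hu
    obtain ⟨hu0, hu1⟩ := hu
    have h1 : ((u ^ (-β) : ℝ) : ℂ) = (u:ℂ) ^ (((1-β:ℝ):ℂ) - 1) := by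
      rw [Complex.ofReal_cpow hu0.le]
      congr 1
      push_cast; ring
    have h2 : (((1-u) ^ (β-1) : ℝ) : ℂ) = ((1:ℂ)-u) ^ (((β:ℝ):ℂ) - 1) := by
      rw [Complex.ofReal_cpow (by linarith)]
      push_cast; ring_nf
    rw [Complex.ofReal_mul, h1, h2]
  have hint : IntegrableOn (fun u : ℝ => u ^ (-β) * (1-u) ^ (β-1)) (Ioo 0 1) := by
    have h2 : IntegrableOn (fun u : ℝ => ((u ^ (-β) * (1-u) ^ (β-1) : ℝ) : ℂ)) (Ioo 0 1) :=
      hIoo.congr_fun_ae hae.symm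
    simpa [IntegrableOn] using (Complex.reCLM.integrable_comp h2).congr
      (Filter.Eventually.of_forall fun u => by simp)
  refine ⟨hint, ?_⟩
  have hFval : ∫ u in Ioo (0:ℝ) 1, F u = ((π / Real.sin (π * β) : ℝ) : ℂ) := by
    have h1 : ∫ u in Ioo (0:ℝ) 1, F u = Complex.betaIntegral ((1-β:ℝ):ℂ) ((β:ℝ):ℂ) := by
      rw [Complex.betaIntegral, intervalIntegral.integral_of_le zero_le_one,
        ← integral_Ioc_eq_integral_Ioo]
    have hb : Complex.betaIntegral ((1-β:ℝ):ℂ) ((β:ℝ):ℂ)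
        = Complex.Gamma ((1-β:ℝ):ℂ) * Complex.Gamma ((β:ℝ):ℂ) := by
      rw [Complex.Gamma_mul_Gamma_eq_betaIntegral hre hre',
        show ((1-β:ℝ):ℂ) + ((β:ℝ):ℂ) = 1 by push_cast; ring, Complex.Gamma_one, one_mul]
    rw [h1, hb]
    have h2 := Complex.Gamma_mul_Gamma_one_sub ((β:ℝ):ℂ)
    rw [show (1 : ℂ) - ((β:ℝ):ℂ) = ((1-β:ℝ):ℂ) by push_cast; ring] at h2
    rw [mul_comm, h2, show ((π:ℂ) * (β:ℂ)) = ((π * β : ℝ):ℂ) by push_cast; ring,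
      ← Complex.ofReal_sin, ← Complex.ofReal_div]
  calc ∫ u in Ioo (0:ℝ) 1, u ^ (-β) * (1-u) ^ (β-1)
      = ∫ u in Ioo (0:ℝ) 1, (F u).re := by
        refine integral_congr_ae (hae.mono fun u h => ?_)
        simpa using congrArg Complex.re h
    _ = (∫ u in Ioo (0:ℝ) 1, F u).re := by
        simpa using (ContinuousLinearMap.integral_comp_comm Complex.reCLM hIoo)
    _ = π / Real.sin (π * β) := by rw [hFval, Complex.ofReal_re]

lemma logistic_aux {β : ℝ} (hβ : β ∈ Set.Ioo 0 1) :
    Integrable (fun z : ℝ => rexp ((1-β)*z) * (rexp z + 1)⁻¹) ∧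
    ∫ z : ℝ, rexp ((1-β)*z) * (rexp z + 1)⁻¹ = π / Real.sin (π * β) := by
  obtain ⟨hβ0, hβ1⟩ := hβ
  set g : ℝ → ℝ := fun z => rexp ((1-β)*z) * (rexp z + 1)⁻¹ with hg
  set f : ℝ → ℝ := fun u => Real.log u - Real.log (1-u) with hf
  set f' : ℝ → ℝ := fun u => u⁻¹ + (1-u)⁻¹ with hf'
  have hderiv : ∀ u ∈ Ioo (0:ℝ) 1, HasDerivWithinAt f (f' u) (Ioo 0 1) u := by
    intro u hu
    have h1 : HasDerivAt (fun u : ℝ => Real.log u) u⁻¹ u := Real.hasDerivAt_log hu.1.ne'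
    have h2 : HasDerivAt (fun u : ℝ => Real.log (1-u)) (-(1-u)⁻¹) u := by
      have hsub : HasDerivAt (fun u : ℝ => 1-u) (-1) u := by
        exact (hasDerivAt_id u).const_sub 1
      have := hsub.log ((by linarith [hu.2] : (0:ℝ) < 1-u).ne')
      rw [neg_div, one_div] at this
      exact this
    have := h1.sub h2
    have h3 : u⁻¹ - -(1-u)⁻¹ = f' u := by rw [hf']; ring
    rw [h3] at this
    exact this.hasDerivWithinAt
  have hinj : InjOn f (Ioo 0 1) := by
    have : StrictMonoOn f (Ioo (0:ℝ) 1) := by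
      intro u hu v hv huv
      have h1 : Real.log u < Real.log v := Real.log_lt_log hu.1 huv
      have h2 : Real.log (1-v) < Real.log (1-u) := Real.log_lt_log (by linarith [hv.2]) (by linarith)
      simp only [hf]
      linarith
    exact this.injOn
  have himg : f '' (Ioo 0 1) = univ := by
    apply eq_univ_of_forall
    intro z
    refine ⟨rexp z / (1 + rexp z), ⟨?_, ?_⟩, ?_⟩
    · positivity
    · rw [div_lt_one (by positivity)]; linarith [Real.exp_pos z]
    · have h1 : (1:ℝ) - rexp z / (1 + rexp z) = 1 / (1 + rexp z) := by
        field_simp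
        ring
      rw [hf]
      simp only [h1]
      rw [Real.log_div (Real.exp_pos z).ne' (by positivity), Real.log_div one_ne_zero (by positivity)]
      simp [Real.log_exp]
  have hkey : ∀ u ∈ Ioo (0:ℝ) 1, |f' u| • g (f u) = u ^ (-β) * (1-u) ^ (β-1) := by
    intro u hu
    obtain ⟨hu0, hu1⟩ := hu
    have h1u : (0:ℝ) < 1 - u := by linarith
    have he : rexp (f u) = u / (1-u) := by
      rw [hf]; rw [Real.exp_sub, Real.exp_log hu0, Real.exp_log h1u]
    have hlog : Real.log (u / (1-u)) = f u := by
      rw [Real.log_div hu0.ne' h1u.ne', hf]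
    have he2 : rexp ((1-β) * f u) = u ^ (1-β) * (1-u) ^ (β-1) := by
      have e1 : rexp ((1-β) * f u) = (u / (1-u)) ^ (1-β) := by
        rw [Real.rpow_def_of_pos (div_pos hu0 h1u), hlog, mul_comm]
      rw [e1, Real.div_rpow hu0.le h1u.le, div_eq_mul_inv, ← Real.rpow_neg h1u.le]
      norm_num
    have hsum : rexp (f u) + 1 = (1-u)⁻¹ := by
      rw [he]; field_simp; ring
    have hA : u ^ ((1:ℝ)-β) = u * u ^ (-β) := by
      rw [show (1:ℝ)-β = 1 + (-β) by ring, Real.rpow_add hu0, Real.rpow_one]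
    have hfpos : 0 < f' u := by
      rw [hf']; positivity
    rw [abs_of_pos hfpos, smul_eq_mul, hg]
    simp only []
    rw [he2, hsum, hA, hf', inv_inv]
    field_simp
    ring
  have hbeta := beta_aux ⟨hβ0, hβ1⟩
  constructor
  · rw [← integrableOn_univ, ← himg,
      integrableOn_image_iff_integrableOn_abs_deriv_smul measurableSet_Ioo hderiv hinj]
    exact hbeta.1.congr_fun (fun u hu => (hkey u hu).symm) measurableSet_Ioo
  · calc ∫ z : ℝ, g z = ∫ z in f '' (Ioo 0 1), g z := by rw [himg, Measure.restrict_univ]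
      _ = ∫ u in Ioo (0:ℝ) 1, |f' u| • g (f u) :=
          integral_image_eq_integral_abs_deriv_smul measurableSet_Ioo hderiv hinj g
      _ = ∫ u in Ioo (0:ℝ) 1, u ^ (-β) * (1-u) ^ (β-1) :=
          setIntegral_congr_fun measurableSet_Ioo hkey
      _ = π / Real.sin (π * β) := hbeta.2

lemma scalar_main {β : ℝ} (hβ : β ∈ Set.Ioo 0 1) {t : ℝ} (ht : 0 < t) :
    Integrable (fun y : ℝ => rexp ((1-β)*y) * (rexp y + t)⁻¹) ∧
    ∫ y : ℝ, rexp ((1-β)*y) * (rexp y + t)⁻¹ = (π / Real.sin (π * β)) * t ^ (-β) := by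
  obtain ⟨hg, hgval⟩ := logistic_aux hβ
  set g : ℝ → ℝ := fun z => rexp ((1-β)*z) * (rexp z + 1)⁻¹ with hgdef
  have hkey : ∀ y : ℝ, rexp ((1-β)*y) * (rexp y + t)⁻¹ = t ^ (-β) * g (y - Real.log t) := by
    intro y
    rw [hgdef]
    simp only []
    rw [Real.exp_sub, Real.exp_log ht]
    have h1 : rexp ((1-β)*(y - Real.log t)) = rexp ((1-β)*y) * t ^ (β-1) := by
      rw [Real.rpow_def_of_pos ht, ← Real.exp_add]
      ring_nf
    rw [h1]
    have h2 : (rexp y / t + 1)⁻¹ = t * (rexp y + t)⁻¹ := by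
      rw [div_add' _ _ _ ht.ne']
      rw [inv_div, one_mul]
      rw [div_eq_mul_inv, mul_comm]
    rw [h2]
    have h3 : t ^ (-β) * t ^ (β-1) * t = 1 := by
      nth_rewrite 3 [show t = t ^ (1:ℝ) by rw [Real.rpow_one]]
      rw [← Real.rpow_add ht, ← Real.rpow_add ht]
      rw [show -β + (β - 1) + 1 = 0 by ring, Real.rpow_zero]
    rw [show t ^ (-β) * (rexp ((1-β)*y) * t ^ (β-1) * (t * (rexp y + t)⁻¹))
        = rexp ((1-β)*y) * (rexp y + t)⁻¹ * (t ^ (-β) * t ^ (β-1) * t) from by ring, h3, mul_one]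
  constructor
  · exact ((hg.comp_sub_right (Real.log t)).const_mul _).congr
      (Filter.Eventually.of_forall fun y => (hkey y).symm)
  · simp_rw [hkey]
    rw [integral_const_mul, integral_sub_right_eq_self g (Real.log t), hgval]
    ring

/-- Balakrishnan representation after the substitution `μ = e^y`, in a unital
C*-algebra: if `a` is selfadjoint with spectrum in `[c0, ∞)`, `c0 > 0`, and
`β ∈ (0,1)`, then every `e^y·1 + a` is invertible, `y ↦ e^{(1-β)y} (e^y·1 + a)⁻¹` is
Bochner integrable on `ℝ`, and `a^{-β} = (sin(πβ)/π) ∫_{-∞}^{∞} e^{(1-β)y} (e^y·1 + a)⁻¹ dy`,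
where fractional powers of `a` are given by the continuous functional calculus. -/
theorem cstar_balakrishnan_exp
    (𝒜 : Type*) [CStarAlgebra 𝒜] (c0 : ℝ) (hc0 : 0 < c0)
    (a : 𝒜) (ha : IsSelfAdjoint a) (hspec : spectrum ℝ a ⊆ Set.Ici c0)
    (β : ℝ) (hβ : β ∈ Set.Ioo 0 1) :
    (∀ y : ℝ, IsUnit (algebraMap ℝ 𝒜 (Real.exp y) + a)) ∧
    Integrable (fun y : ℝ =>
      Real.exp ((1 - β) * y) • Ring.inverse (algebraMap ℝ 𝒜 (Real.exp y) + a)) ∧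
    cfc (fun t : ℝ => t ^ (-β)) a =
      (Real.sin (π * β) / π) •
        ∫ y : ℝ, Real.exp ((1 - β) * y) • Ring.inverse (algebraMap ℝ 𝒜 (Real.exp y) + a) := by
  obtain ⟨hβ0, hβ1⟩ := hβ
  -- positivity of denominators on the spectrum
  have hpos : ∀ y : ℝ, ∀ x ∈ spectrum ℝ a, 0 < rexp y + x := by
    intro y x hx
    have := hspec hx
    have := Real.exp_pos y
    simp only [Set.mem_Ici] at *
    linarith
  have hcont1 : ∀ y : ℝ, ContinuousOn (fun t : ℝ => (rexp y + t)⁻¹) (spectrum ℝ a) := by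
    intro y
    exact (continuousOn_const.add continuousOn_id).inv₀ fun x hx => (hpos y x hx).ne'
  -- identification of the resolvent via cfc
  have hb : ∀ y : ℝ, algebraMap ℝ 𝒜 (rexp y) + a = cfc (fun t : ℝ => rexp y + t) a := by
    intro y
    rw [cfc_const_add (rexp y) (fun t : ℝ => t) a, cfc_id' ℝ a]
  have hunit : ∀ y : ℝ, IsUnit (algebraMap ℝ 𝒜 (rexp y) + a) := by
    intro y
    apply spectrum.isUnit_of_zero_notMem (R := ℝ)
    rw [hb y, cfc_map_spectrum (fun t : ℝ => rexp y + t) a]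
    rintro ⟨x, hx, h0⟩
    exact absurd h0 (hpos y x hx).ne'
  have hinv : ∀ y : ℝ, Ring.inverse (algebraMap ℝ 𝒜 (rexp y) + a)
      = cfc (fun t : ℝ => (rexp y + t)⁻¹) a := by
    intro y
    rw [hb y, ← cfc_inv (a := a) (f := fun t : ℝ => rexp y + t) (fun x hx => (hpos y x hx).ne')]
  -- the integrand as a cfc
  have hcfc : ∀ y : ℝ, cfc (fun t : ℝ => rexp ((1-β)*y) * (rexp y + t)⁻¹) a
      = rexp ((1-β)*y) • Ring.inverse (algebraMap ℝ 𝒜 (rexp y) + a) := by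
    intro y
    rw [cfc_const_mul _ _ a (hcont1 y), hinv y]
  set f : ℝ → ℝ → ℝ := fun y t => rexp ((1-β)*y) * (rexp y + t)⁻¹ with hfdef
  set bound : ℝ → ℝ := fun y => rexp ((1-β)*y) * (rexp y + c0)⁻¹ with hbounddef
  have hsm := scalar_main (Set.mem_Ioo.mpr ⟨hβ0, hβ1⟩) hc0
  have hcont : ∀ y : ℝ, ContinuousOn (f y) (spectrum ℝ a) := fun y =>
    continuousOn_const.mul (hcont1 y)
  have hbound : ∀ y : ℝ, ∀ z ∈ spectrum ℝ a, ‖f y z‖ ≤ ‖bound y‖ := by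
    intro y z hz
    have h1 : (0:ℝ) < rexp y + c0 := by positivity
    have h2 : rexp y + c0 ≤ rexp y + z := by
      have := hspec hz; simp only [Set.mem_Ici] at this; linarith
    have h3 := hpos y z hz
    rw [Real.norm_eq_abs, Real.norm_eq_abs, abs_of_pos (by positivity),
      abs_of_pos (by positivity)]
    exact mul_le_mul_of_nonneg_left (by gcongr) (Real.exp_pos _).le
  have hfun_cont : Continuous
      (fun p : ℝ × (spectrum ℝ a) => rexp ((1-β)*p.1) * (rexp p.1 + (p.2:ℝ))⁻¹) := by
    apply Continuous.mul
    · exact Real.continuous_exp.comp (continuous_const.mul continuous_fst)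
    · exact ((Real.continuous_exp.comp continuous_fst).add
        (continuous_subtype_val.comp continuous_snd)).inv₀
        fun p => (hpos p.1 p.2 p.2.2).ne'
  have key : cfc (fun r : ℝ => ∫ y : ℝ, f y r) a = ∫ y : ℝ, cfc (f y) a := by
    have hfc : ContinuousOn (Function.uncurry f) (univ ×ˢ spectrum ℝ a) := by
      show ContinuousOn (fun p : ℝ × ℝ => rexp ((1-β)*p.1) * (rexp p.1 + p.2)⁻¹) _
      exact (by fun_prop : Continuous fun p : ℝ × ℝ => rexp ((1-β)*p.1)).continuousOn.mul
        ((by fun_prop : Continuous fun p : ℝ × ℝ => rexp p.1 + p.2).continuousOn.inv₀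
          fun p hp => (hpos p.1 p.2 hp.2).ne')
    exact cfc_integral f bound a hfc
      (ae_of_all _ fun y z hz => (hbound y z hz).trans (le_of_eq (Real.norm_of_nonneg
        (by show 0 ≤ rexp ((1-β)*y) * (rexp y + c0)⁻¹; positivity))))
      hsm.1.hasFiniteIntegral
  -- integrability of the operator-valued integrand
  have hfc_int : Integrable (fun y : ℝ =>
      (⟨_, (hcont y).restrict⟩ : C(spectrum ℝ a, ℝ))) volume := by
    refine ⟨?_, ?_⟩
    · exact (ContinuousMap.curry ⟨_, hfun_cont⟩ |>.continuous).aestronglyMeasurable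
    · refine hsm.1.hasFiniteIntegral.mono (ae_of_all _ fun y => ?_)
      rw [ContinuousMap.norm_le _ (norm_nonneg (bound y))]
      exact fun z => hbound y z.1 z.2
  have hint : Integrable (fun y : ℝ =>
      rexp ((1 - β) * y) • Ring.inverse (algebraMap ℝ 𝒜 (rexp y) + a)) := by
    refine ((cfcL (R := ℝ) ha).integrable_comp hfc_int).congr (ae_of_all _ fun y => ?_)
    show cfcL (R := ℝ) ha (⟨_, (hcont y).restrict⟩ : C(spectrum ℝ a, ℝ))
      = rexp ((1 - β) * y) • Ring.inverse (algebraMap ℝ 𝒜 (rexp y) + a)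
    rw [cfcL_apply, ← cfc_apply (f y) a ha (hcont y), hcfc y]
  refine ⟨hunit, hint, ?_⟩
  -- compute both sides
  have hrpow_cont : ContinuousOn (fun t : ℝ => t ^ (-β)) (spectrum ℝ a) := fun x hx =>
    (Real.continuousAt_rpow_const x (-β)
      (Or.inl (lt_of_lt_of_le hc0 (hspec hx)).ne')).continuousWithinAt
  have hlhs : cfc (fun r : ℝ => ∫ y : ℝ, f y r) a
      = (π / Real.sin (π * β)) • cfc (fun t : ℝ => t ^ (-β)) a := by
    rw [cfc_congr (g := fun t : ℝ => (π / Real.sin (π * β)) * t ^ (-β))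
      (fun r hr => (scalar_main (Set.mem_Ioo.mpr ⟨hβ0, hβ1⟩)
        (lt_of_lt_of_le hc0 (hspec hr))).2),
      cfc_const_mul _ _ a hrpow_cont]
  have hrhs : (∫ y : ℝ, cfc (f y) a)
      = ∫ y : ℝ, rexp ((1 - β) * y) • Ring.inverse (algebraMap ℝ 𝒜 (rexp y) + a) :=
    integral_congr_ae (ae_of_all _ fun y => hcfc y)
  have hsin : Real.sin (π * β) ≠ 0 := by
    refine (Real.sin_pos_of_pos_of_lt_pi (by positivity) ?_).ne'
    exact (mul_lt_iff_lt_one_right pi_pos).mpr hβ1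
  have hπ : (π : ℝ) ≠ 0 := pi_ne_zero
  rw [← hrhs, ← key, hlhs, smul_smul]
  rw [show Real.sin (π * β) / π * (π / Real.sin (π * β)) = 1 by field_simp, one_smul]
end

section
/- Let X be a complex Hilbert space, Y a complex normed space, and j : Y → X a linear map with ‖j v‖_X ≤ ‖v‖_Y for all v ∈ Y. Let B : Y × Y → ℂ be a sesquilinear form and ω ∈ [0, π/2), and assume the numerical range condition: Re B(v, v) ≥ 0 and |Im B(v, v)| ≤ tan(ω) · Re B(v, v) for all v ∈ Y. Let z ∈ ℂ with Re z < 0, f ∈ X and u ∈ Y satisfy B(u, φ) − z ⟨j u, j φ⟩_X = ⟨f, j φ⟩_X for all φ ∈ Y. Then |z| · ‖j u‖_X ≤ (cos ω)^{-1} ‖f‖_X. -/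
open Real Complex

lemma sector_aux_real (s c a b p q : ℝ) (hs : 0 ≤ s) (hc : 0 < c)
    (hsc : s^2 + c^2 = 1) (ha : 0 ≤ a) (hp : 0 ≤ p) (hq : |q| * c ≤ p * s) :
    (a^2 + b^2) * c^2 ≤ (a + p)^2 + (b - q)^2 := by
  rcases eq_or_lt_of_le hs with h0 | h0
  · have hs0 : s = 0 := h0.symm
    subst hs0
    have hq0 : q = 0 := by
      have h1 : |q| ≤ 0 := by nlinarith [abs_nonneg q]
      exact abs_eq_zero.mp (le_antisymm h1 (abs_nonneg q))
    subst hq0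
    nlinarith [sq_nonneg b, mul_nonneg ha hp, sq_nonneg p]
  · have hq2 : q^2 * c^2 ≤ p^2 * s^2 := by
      have := mul_le_mul hq hq (by positivity) (by positivity)
      nlinarith [_root_.sq_abs q]
    nlinarith [sq_nonneg (b * s^2 - q), mul_nonneg (mul_nonneg ha hp) (mul_pos h0 h0).le,
      mul_nonneg (sq_nonneg (a*s)) (sq_nonneg s), sq_nonneg (b*s), mul_pos h0 h0]

lemma sector_aux (ω : ℝ) (hω0 : 0 ≤ ω) (hωlt : ω < π / 2) (w lam : ℂ)
    (hw1 : 0 ≤ w.re) (hw2 : |w.im| ≤ Real.tan ω * w.re) (hlam : lam.re ≤ 0) :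
    Real.cos ω * ‖lam‖ ≤ ‖lam - w‖ := by
  have hc : 0 < Real.cos ω := Real.cos_pos_of_mem_Ioo ⟨by linarith [pi_pos], hωlt⟩
  have hs : 0 ≤ Real.sin ω := Real.sin_nonneg_of_nonneg_of_le_pi hω0 (by linarith [pi_pos])
  have hq : |w.im| * Real.cos ω ≤ w.re * Real.sin ω := by
    have := Real.tan_eq_sin_div_cos ω
    rw [this] at hw2
    calc |w.im| * Real.cos ω ≤ (Real.sin ω / Real.cos ω * w.re) * Real.cos ω := by
          exact mul_le_mul_of_nonneg_right hw2 hc.le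
      _ = w.re * Real.sin ω := by field_simp
  have key : (Real.cos ω * ‖lam‖)^2 ≤ (‖lam - w‖)^2 := by
    have h1 : (‖lam‖)^2 = lam.re^2 + lam.im^2 := by
      rw [Complex.sq_norm, Complex.normSq_apply]; ring
    have h2 : (‖lam - w‖)^2 = (lam.re - w.re)^2 + (lam.im - w.im)^2 := by
      rw [Complex.sq_norm, Complex.normSq_apply]; simp [Complex.sub_re, Complex.sub_im]; ring
    have := sector_aux_real (Real.sin ω) (Real.cos ω) (-lam.re) lam.im w.re w.im
      hs hc (by rw [Real.sin_sq_add_cos_sq]) (by linarith) hw1 hq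
    nlinarith [this]
  have h3 : 0 ≤ Real.cos ω * ‖lam‖ := by positivity
  exact (pow_le_pow_iff_left₀ h3 (norm_nonneg _) two_ne_zero).mp key

/-- Sectorial resolvent estimate (2.4) in weak form: if the numerical range of `B`
lies in the sector `S_ω` (i.e. `Re B(v,v) ≥ 0` and `|Im B(v,v)| ≤ tan ω · Re B(v,v)`),
`‖j v‖_X ≤ ‖v‖_Y`, `Re z < 0`, and `u` solves
`B(u, φ) − z ⟨j u, j φ⟩_X = ⟨f, j φ⟩_X` for all `φ ∈ Y` (the inner products being
linear in the first and conjugate-linear in the second slot), then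
`|z| ‖j u‖_X ≤ (cos ω)⁻¹ ‖f‖_X`. -/
theorem weak_resolvent_bound_sectorial
    {X Y : Type*} [NormedAddCommGroup X] [InnerProductSpace ℂ X]
    [NormedAddCommGroup Y] [NormedSpace ℂ Y]
    (j : Y →ₗ[ℂ] X) (hj : ∀ v : Y, ‖j v‖ ≤ ‖v‖)
    (B : Y → Y → ℂ) (ω : ℝ) (hω0 : 0 ≤ ω) (hωlt : ω < π / 2)
    (hsect : ∀ v : Y, 0 ≤ (B v v).re ∧ |(B v v).im| ≤ Real.tan ω * (B v v).re)
    (z : ℂ) (hz : z.re < 0) (f : X) (u : Y)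
    (heq : ∀ φ : Y, B u φ - z * (inner ℂ (j φ) (j u) : ℂ) = (inner ℂ (j φ) f : ℂ)) :
    ‖z‖ * ‖j u‖ ≤ (Real.cos ω)⁻¹ * ‖f‖ := by
  have hc : 0 < Real.cos ω := Real.cos_pos_of_mem_Ioo ⟨by linarith [pi_pos], hωlt⟩
  set t : ℝ := ‖j u‖ with ht
  have ht0 : 0 ≤ t := norm_nonneg _
  have h := heq u
  have hinner : (inner ℂ (j u) (j u) : ℂ) = ((t^2 : ℝ) : ℂ) := by
    rw [inner_self_eq_norm_sq_to_K, ht]; norm_cast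
  rw [hinner] at h
  set lam : ℂ := z * ((t^2 : ℝ) : ℂ) with hlam
  have hsub : lam - B u u = -(inner ℂ (j u) f : ℂ) := by
    rw [hlam]; linear_combination -h
  have habs : ‖lam - B u u‖ ≤ t * ‖f‖ := by
    rw [hsub, norm_neg]
    calc ‖(inner ℂ (j u) f : ℂ)‖ = ‖(inner ℂ (j u) f : ℂ)‖ := rfl
      _ ≤ ‖j u‖ * ‖f‖ := norm_inner_le_norm _ _
  have hlamre : lam.re ≤ 0 := by
    rw [hlam, Complex.mul_re, Complex.ofReal_re, Complex.ofReal_im]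
    nlinarith [sq_nonneg t]
  have hsec := hsect u
  have hkey := sector_aux ω hω0 hωlt (B u u) lam hsec.1 hsec.2 hlamre
  have hablam : ‖lam‖ = ‖z‖ * t^2 := by
    rw [hlam, norm_mul, Complex.norm_real, Real.norm_eq_abs, _root_.abs_of_nonneg (sq_nonneg t)]
  rw [hablam] at hkey
  have hmain : Real.cos ω * (‖z‖ * t^2) ≤ t * ‖f‖ := le_trans hkey habs
  rcases eq_or_lt_of_le ht0 with h0 | h0
  · rw [← h0]
    have : ‖z‖ * 0 = 0 := by ring
    rw [this]
    positivity
  · rw [inv_mul_eq_div, le_div_iff₀ hc]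
    nlinarith [norm_nonneg z, mul_pos h0 hc]
end
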